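/- arXiv:1903.03928 — 6 statements merged into one kernel-verified Lean document; each statement's English description precedes it below -/
import Mathlib

section
/- For any invertible linear map A of a finite-dimensional real inner product space V and any vector w in V, we have ‖Aw‖ ≥ cos(∠(w, v(A))) · ‖A‖ · ‖w‖, where v(A) denotes a unit vector achieving the operator norm of A (i.e., the right singular vector corresponding to the largest singular value) and ∠ denotes the angle between the lines spanned by the vectors. -/
open scoped RealInnerProductSpace

/-- For an invertible linear map `A` of a finite-dimensional real inner
product space `V` and any `w ∈ V`, `‖Aw‖ ≥ cos ∠(w, v(A)) · ‖A‖ · ‖w‖`, where `v = v(A)` is a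
unit vector achieving the operator norm of `A` and
`cos ∠(w, v) = |⟨w, v⟩| / (‖w‖ · ‖v‖)`. -/
theorem stmt0
    {V : Type*} [NormedAddCommGroup V] [InnerProductSpace ℝ V] [FiniteDimensional ℝ V]
    (A : V ≃L[ℝ] V) (v : V) (hv1 : ‖v‖ = 1)
    (hvA : ‖(A : V →L[ℝ] V) v‖ = ‖(A : V →L[ℝ] V)‖)
    (w : V) :
    |(⟪w, v⟫)| / (‖w‖ * ‖v‖) * ‖(A : V →L[ℝ] V)‖ * ‖w‖ ≤ ‖(A : V →L[ℝ] V) w‖ := by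
  set B := (A : V →L[ℝ] V) with hB
  set c : ℝ := ⟪w, v⟫ with hc
  set u : V := w - c • v with hu
  have hvv : ⟪v, v⟫ = (1 : ℝ) := by
    rw [real_inner_self_eq_norm_sq, hv1]; norm_num
  have hvu : ⟪v, u⟫ = (0 : ℝ) := by
    simp [hu, inner_sub_right, real_inner_smul_right, hvv, real_inner_comm v w, hc, hv1]
  have hvu' : ⟪u, v⟫ = (0 : ℝ) := by rw [real_inner_comm]; exact hvu
  have hnorm2 : ∀ t : ℝ, ‖v + t • u‖ ^ 2 = 1 + t ^ 2 * ‖u‖ ^ 2 := by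
    intro t
    rw [← real_inner_self_eq_norm_sq]
    simp only [inner_add_add_self, real_inner_smul_right, real_inner_smul_left,
      hvu, hvu', hvv]
    rw [real_inner_self_eq_norm_sq]
    ring
  have hBv : ‖B v‖ = ‖B‖ := hvA
  have hMnn : ‖B u‖ ≤ ‖B‖ * ‖u‖ := B.le_opNorm u
  have hBnn : (0:ℝ) ≤ ‖B‖ := norm_nonneg _
  have hkey : ∀ t : ℝ, 2 * t * ⟪B v, B u⟫ ≤ t ^ 2 * (‖B‖ ^ 2 * ‖u‖ ^ 2 - ‖B u‖ ^ 2) := by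
    intro t
    have h1 : ‖B (v + t • u)‖ ≤ ‖B‖ * ‖v + t • u‖ := B.le_opNorm _
    have h2 : ‖B (v + t • u)‖ ^ 2 ≤ ‖B‖ ^ 2 * ‖v + t • u‖ ^ 2 := by
      nlinarith [norm_nonneg (B (v + t • u)), norm_nonneg (v + t • u)]
    have h3 : ‖B (v + t • u)‖ ^ 2 =
        ‖B v‖ ^ 2 + 2 * t * ⟪B v, B u⟫ + t ^ 2 * ‖B u‖ ^ 2 := by
      rw [map_add, map_smul, ← real_inner_self_eq_norm_sq]
      simp only [inner_add_add_self, real_inner_smul_right, real_inner_smul_left,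
        real_inner_comm (B u) (B v)]
      rw [real_inner_self_eq_norm_sq, real_inner_self_eq_norm_sq]
      ring
    rw [h3, hnorm2 t] at h2
    rw [hBv] at h2
    nlinarith
  have hortho : ⟪B v, B u⟫ = (0 : ℝ) := by
    set M : ℝ := ‖B‖ ^ 2 * ‖u‖ ^ 2 - ‖B u‖ ^ 2 with hM
    have hM0 : 0 ≤ M := by nlinarith [norm_nonneg (B u), norm_nonneg u]
    set d : ℝ := ⟪B v, B u⟫ with hd
    have hM1 : (0:ℝ) < M + 1 := by linarith
    have h := hkey (d / (M + 1))
    have h' := mul_le_mul_of_nonneg_right h (sq_nonneg (M + 1))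
    have e1 : 2 * (d / (M + 1)) * d * (M + 1) ^ 2 = 2 * d ^ 2 * (M + 1) := by
      field_simp
    have e2 : (d / (M + 1)) ^ 2 * M * (M + 1) ^ 2 = d ^ 2 * M := by
      field_simp
    rw [e1, e2] at h'
    have hd2 : d ^ 2 ≤ 0 := by
      nlinarith [mul_nonneg (sq_nonneg d) hM0]
    exact (pow_eq_zero_iff two_ne_zero).mp (le_antisymm hd2 (sq_nonneg d))
  have hw : w = c • v + u := by rw [hu]; abel
  have hortho' : ⟪B u, B v⟫ = (0 : ℝ) := by rw [real_inner_comm]; exact hortho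
  have hBw2 : ‖B w‖ ^ 2 = c ^ 2 * ‖B‖ ^ 2 + ‖B u‖ ^ 2 := by
    rw [hw, map_add, map_smul, ← real_inner_self_eq_norm_sq]
    simp only [inner_add_add_self, real_inner_smul_right, real_inner_smul_left,
      hortho, hortho']
    rw [real_inner_self_eq_norm_sq, real_inner_self_eq_norm_sq, hBv]
    ring
  have hmain : |c| * ‖B‖ ≤ ‖B w‖ := by
    nlinarith [norm_nonneg (B w), norm_nonneg (B u), abs_nonneg c, sq_abs c]
  rcases eq_or_ne w 0 with rfl | hw0
  · simp
  · have hwn : (0:ℝ) < ‖w‖ := norm_pos_iff.mpr hw0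
    rw [hv1, mul_one]
    have e : |c| / ‖w‖ * ‖B‖ * ‖w‖ = |c| * ‖B‖ := by
      field_simp
    rw [e]
    exact hmain
end

section
/- Let θ > 0 and let A, B, C, D be invertible linear maps of a finite-dimensional real inner product space V such that the angle between B*v(A) and the hyperplane orthogonal to C u(D) is greater than θ. Then ‖ABCD‖ ≥ ‖A‖·‖D‖·sin(θ)·m(B)²m(C)²/(‖B‖‖C‖), where m(X) = ‖X⁻¹‖⁻¹ is the co-norm and u(X), v(X) are unit vectors with X v(X) = ‖X‖ u(X). -/
open scoped RealInnerProductSpace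

open ContinuousLinearMap in
private lemma adjoint_top_singular
    {V : Type*} [NormedAddCommGroup V] [InnerProductSpace ℝ V] [FiniteDimensional ℝ V]
    (A : V →L[ℝ] V) (u v : V) (hu : ‖u‖ = 1) (hv : ‖v‖ = 1)
    (hA : A v = ‖A‖ • u) :
    adjoint A u = ‖A‖ • v := by
  have hin : ⟪adjoint A u, v⟫ = ‖A‖ := by
    rw [adjoint_inner_left, hA, real_inner_smul_right, real_inner_self_eq_norm_sq, hu]
    ring
  have hle : ‖adjoint A u‖ ≤ ‖A‖ := by
    calc ‖adjoint A u‖ ≤ ‖adjoint A‖ * ‖u‖ := le_opNorm _ _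
    _ = ‖A‖ := by rw [hu, (adjoint (𝕜 := ℝ) (E := V) (F := V)).norm_map]; ring
  have hsq : ‖adjoint A u - ‖A‖ • v‖ ^ 2 ≤ 0 := by
    rw [norm_sub_sq_real, real_inner_smul_right, hin, norm_smul, hv]
    have h1 : ‖adjoint A u‖ ^ 2 ≤ ‖A‖ ^ 2 := by
      apply sq_le_sq' _ hle
      nlinarith [norm_nonneg (adjoint A u), norm_nonneg A]
    have : ‖(‖A‖ : ℝ)‖ = ‖A‖ := abs_of_nonneg (norm_nonneg A)
    nlinarith [norm_nonneg A]
  have := pow_eq_zero_iff (n := 2) (by norm_num) |>.mp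
    (le_antisymm hsq (sq_nonneg _))
  exact sub_eq_zero.mp (norm_eq_zero.mp this)

set_option maxHeartbeats 1600000 in
/-- If `θ > 0` and `A, B, C, D` are invertible linear maps of a
finite-dimensional real inner product space such that the angle between `B* v(A)` and the
hyperplane orthogonal to `C u(D)` is greater than `θ` (equivalently
`|⟨B* v(A), C u(D)⟩| ≥ ‖B* v(A)‖·‖C u(D)‖·sin θ`), then
`‖ABCD‖ ≥ ‖A‖·‖D‖·sin θ·m(B)² m(C)² / (‖B‖‖C‖)`, where `m(X) = ‖X⁻¹‖⁻¹` is the co-norm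
and `u(X), v(X)` are unit vectors with `X v(X) = ‖X‖ u(X)`. -/
theorem stmt1
    {V : Type*} [NormedAddCommGroup V] [InnerProductSpace ℝ V] [FiniteDimensional ℝ V]
    (θ : ℝ) (hθ : 0 < θ)
    (A B C D : V ≃L[ℝ] V)
    (uA vA uD vD : V)
    (huA : ‖uA‖ = 1) (hvA : ‖vA‖ = 1) (huD : ‖uD‖ = 1) (hvD : ‖vD‖ = 1)
    (hA : (A : V →L[ℝ] V) vA = ‖(A : V →L[ℝ] V)‖ • uA)
    (hD : (D : V →L[ℝ] V) vD = ‖(D : V →L[ℝ] V)‖ • uD)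
    (hangle : ‖ContinuousLinearMap.adjoint (B : V →L[ℝ] V) vA‖ * ‖(C : V →L[ℝ] V) uD‖ *
        Real.sin θ
      ≤ |(⟪ContinuousLinearMap.adjoint (B : V →L[ℝ] V) vA, (C : V →L[ℝ] V) uD⟫)|) :
    ‖(A : V →L[ℝ] V)‖ * ‖(D : V →L[ℝ] V)‖ * Real.sin θ *
        (‖(B.symm : V →L[ℝ] V)‖⁻¹) ^ 2 * (‖(C.symm : V →L[ℝ] V)‖⁻¹) ^ 2 /
        (‖(B : V →L[ℝ] V)‖ * ‖(C : V →L[ℝ] V)‖)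
      ≤ ‖((D.trans (C.trans (B.trans A))) : V →L[ℝ] V)‖ := by
  classical
  set nA := ‖(A : V →L[ℝ] V)‖ with hnA
  set nB := ‖(B : V →L[ℝ] V)‖ with hnB
  set nC := ‖(C : V →L[ℝ] V)‖ with hnC
  set nD := ‖(D : V →L[ℝ] V)‖ with hnD
  set bv := ‖ContinuousLinearMap.adjoint (B : V →L[ℝ] V) vA‖ with hbv
  set cu := ‖(C : V →L[ℝ] V) uD‖ with hcu
  set sB := ‖(B.symm : V →L[ℝ] V)‖ with hsB
  set sC := ‖(C.symm : V →L[ℝ] V)‖ with hsC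
  set M := ((D.trans (C.trans (B.trans A))) : V →L[ℝ] V) with hM
  have hAadj : ContinuousLinearMap.adjoint (A : V →L[ℝ] V) uA = nA • vA :=
    adjoint_top_singular _ uA vA huA hvA hA
  -- the key inner product computation
  have hMapp : M vD = (A : V →L[ℝ] V) ((B : V →L[ℝ] V) ((C : V →L[ℝ] V) ((D : V →L[ℝ] V) vD))) := by
    simp [hM, ContinuousLinearEquiv.trans_apply]
  have hinner : ⟪uA, M vD⟫ =
      nA * nD * ⟪ContinuousLinearMap.adjoint (B : V →L[ℝ] V) vA, (C : V →L[ℝ] V) uD⟫ := by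
    rw [hMapp, hD, map_smul, map_smul, map_smul, real_inner_smul_right,
      ← ContinuousLinearMap.adjoint_inner_left, hAadj, real_inner_smul_left,
      ← ContinuousLinearMap.adjoint_inner_left]
    ring
  have hkey : nA * nD *
      |⟪ContinuousLinearMap.adjoint (B : V →L[ℝ] V) vA, (C : V →L[ℝ] V) uD⟫| ≤ ‖M‖ := by
    have h1 : |⟪uA, M vD⟫| ≤ ‖M‖ := by
      calc |⟪uA, M vD⟫| ≤ ‖uA‖ * ‖M vD‖ := abs_real_inner_le_norm _ _
        _ = ‖M vD‖ := by rw [huA, one_mul]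
        _ ≤ ‖M‖ * ‖vD‖ := M.le_opNorm vD
        _ = ‖M‖ := by rw [hvD, mul_one]
    have h2 : |⟪uA, M vD⟫| = nA * nD *
        |⟪ContinuousLinearMap.adjoint (B : V →L[ℝ] V) vA, (C : V →L[ℝ] V) uD⟫| := by
      rw [hinner, abs_mul, abs_mul, abs_of_nonneg (norm_nonneg _), abs_of_nonneg (norm_nonneg _)]
    linarith [h2 ▸ h1]
  -- lower bounds on bv and cu
  have hBcomp : ContinuousLinearMap.adjoint (B.symm : V →L[ℝ] V)
      (ContinuousLinearMap.adjoint (B : V →L[ℝ] V) vA) = vA := by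
    have h : ((B : V →L[ℝ] V) ∘L (B.symm : V →L[ℝ] V)) = ContinuousLinearMap.id ℝ V :=
      B.coe_comp_coe_symm
    have h2 := congrArg ContinuousLinearMap.adjoint h
    rw [ContinuousLinearMap.adjoint_comp, ContinuousLinearMap.adjoint_id] at h2
    exact congrFun (congrArg DFunLike.coe h2) vA
  have hbv1 : 1 ≤ sB * bv := by
    calc (1:ℝ) = ‖vA‖ := hvA.symm
      _ = ‖ContinuousLinearMap.adjoint (B.symm : V →L[ℝ] V)
          (ContinuousLinearMap.adjoint (B : V →L[ℝ] V) vA)‖ := by rw [hBcomp]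
      _ ≤ ‖ContinuousLinearMap.adjoint (B.symm : V →L[ℝ] V)‖ * bv :=
          ContinuousLinearMap.le_opNorm _ _
      _ = sB * bv := by
          rw [(ContinuousLinearMap.adjoint (𝕜 := ℝ) (E := V) (F := V)).norm_map]
  have hcu1 : 1 ≤ sC * cu := by
    calc (1:ℝ) = ‖uD‖ := huD.symm
      _ = ‖(C.symm : V →L[ℝ] V) ((C : V →L[ℝ] V) uD)‖ := by simp
      _ ≤ sC * cu := ContinuousLinearMap.le_opNorm _ _
  have hsBpos : 0 < sB := by
    nlinarith [norm_nonneg ((B.symm : V →L[ℝ] V)),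
      norm_nonneg (ContinuousLinearMap.adjoint (B : V →L[ℝ] V) vA)]
  have hsCpos : 0 < sC := by
    nlinarith [norm_nonneg ((C.symm : V →L[ℝ] V)), norm_nonneg ((C : V →L[ℝ] V) uD)]
  have hbvpos : 0 < bv := by nlinarith [norm_nonneg ((B.symm : V →L[ℝ] V))]
  have hcupos : 0 < cu := by nlinarith [norm_nonneg ((C.symm : V →L[ℝ] V))]
  have hmB : sB⁻¹ ≤ bv := by
    rw [inv_le_iff_one_le_mul₀ hsBpos]; linarith [hbv1]
  have hmC : sC⁻¹ ≤ cu := by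
    rw [inv_le_iff_one_le_mul₀ hsCpos]; linarith [hcu1]
  -- upper bounds
  have hbv2 : bv ≤ nB := by
    calc bv ≤ ‖ContinuousLinearMap.adjoint (B : V →L[ℝ] V)‖ * ‖vA‖ :=
        ContinuousLinearMap.le_opNorm _ _
      _ = nB := by
        rw [hvA, (ContinuousLinearMap.adjoint (𝕜 := ℝ) (E := V) (F := V)).norm_map, mul_one]
  have hcu2 : cu ≤ nC := by
    calc cu ≤ nC * ‖uD‖ := ContinuousLinearMap.le_opNorm _ _
      _ = nC := by rw [huD, mul_one]
  have hnBpos : 0 < nB := lt_of_lt_of_le hbvpos hbv2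
  have hnCpos : 0 < nC := lt_of_lt_of_le hcupos hcu2
  rcases le_or_gt (Real.sin θ) 0 with hs | hs
  · -- trivial case: LHS nonpositive
    have hnum : nA * nD * Real.sin θ * (sB⁻¹) ^ 2 * (sC⁻¹) ^ 2 ≤ 0 := by
      have h1 : nA * nD * Real.sin θ ≤ 0 :=
        mul_nonpos_of_nonneg_of_nonpos (by positivity) hs
      have h2 : (0:ℝ) ≤ (sB⁻¹) ^ 2 * (sC⁻¹) ^ 2 := by positivity
      nlinarith
    calc nA * nD * Real.sin θ * (sB⁻¹) ^ 2 * (sC⁻¹) ^ 2 / (nB * nC) ≤ 0 :=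
        div_nonpos_of_nonpos_of_nonneg hnum (by positivity)
      _ ≤ ‖M‖ := norm_nonneg _
  · have hsθ : 0 < Real.sin θ := hs
    have hmBpos : (0:ℝ) < sB⁻¹ := by positivity
    have hmCpos : (0:ℝ) < sC⁻¹ := by positivity
    have hprod : (sB⁻¹) ^ 2 * (sC⁻¹) ^ 2 ≤ (bv * cu) * (nB * nC) := by
      nlinarith [mul_le_mul hmB hmC (le_of_lt hmCpos) (le_of_lt hbvpos),
        mul_le_mul hbv2 hcu2 (le_of_lt hcupos) (norm_nonneg (B : V →L[ℝ] V)),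
        mul_pos hbvpos hcupos, mul_pos hmBpos hmCpos]
    have hstep1 : nA * nD * Real.sin θ * (sB⁻¹) ^ 2 * (sC⁻¹) ^ 2 / (nB * nC)
        ≤ nA * nD * (Real.sin θ * (bv * cu)) := by
      rw [div_le_iff₀ (by positivity)]
      have hc : (0:ℝ) ≤ nA * nD * Real.sin θ := by positivity
      nlinarith [mul_le_mul_of_nonneg_left hprod hc]
    have hstep2 : nA * nD * (Real.sin θ * (bv * cu)) ≤ nA * nD *
        |⟪ContinuousLinearMap.adjoint (B : V →L[ℝ] V) vA, (C : V →L[ℝ] V) uD⟫| := by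
      apply mul_le_mul_of_nonneg_left _ (by positivity)
      calc Real.sin θ * (bv * cu) = bv * cu * Real.sin θ := by ring
        _ ≤ _ := hangle
    linarith
end

section
/- Let P be an invertible linear map of a d-dimensional real vector space with d simple real eigenvalues of pairwise distinct absolute values, with eigenvectors v₁,…,v_d. Then for every ε > 0 there exists N ∈ ℕ such that for every line L in projective space, there exists n ≤ N with Pⁿ L contained in the union of the ε-cones around the eigendirections v₁,…,v_d. -/
open scoped RealInnerProductSpace

noncomputable def projAngle {V : Type*} [NormedAddCommGroup V] [InnerProductSpace ℝ V]
    (u w : V) : ℝ :=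
  Real.arccos (|(⟪u, w⟫)| / (‖u‖ * ‖w‖))

section aux
variable {V : Type*} [NormedAddCommGroup V] [InnerProductSpace ℝ V]

lemma projAngle_smul_left (c : ℝ) (hc : c ≠ 0) (u w : V) :
    projAngle (c • u) w = projAngle u w := by
  unfold projAngle
  rw [real_inner_smul_left, norm_smul, abs_mul]
  rw [Real.norm_eq_abs, mul_assoc, mul_div_mul_left _ _ (abs_ne_zero.mpr hc)]

lemma projAngle_self (u : V) (hu : u ≠ 0) : projAngle u u = 0 := by
  unfold projAngle
  rw [real_inner_self_eq_norm_mul_norm, abs_of_nonneg (by positivity),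
    div_self (by have := norm_pos_iff.mpr hu; positivity), Real.arccos_one]

lemma projAngle_continuousAt {u w : V} (hu : u ≠ 0) (hw : w ≠ 0) :
    ContinuousAt (fun x : V => projAngle x w) u := by
  unfold projAngle
  apply Real.continuous_arccos.continuousAt.comp
  apply ContinuousAt.div
  · exact (continuous_abs.comp (continuous_inner.comp
      (continuous_id.prodMk continuous_const))).continuousAt
  · exact (continuous_norm.mul continuous_const).continuousAt
  · have := norm_pos_iff.mpr hu
    have := norm_pos_iff.mpr hw
    positivity

end aux

/-- Let `P` be an invertible linear map of a `d`-dimensional real vector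
space with `d` simple real eigenvalues of pairwise distinct absolute values, with eigenvectors
`v 0, …, v (d-1)`. Then for every `ε > 0` there is `N` such that every line is mapped by some
`Pⁿ`, `n ≤ N`, into the union of the `ε`-cones around the eigendirections. -/
theorem stmt2
    {V : Type*} [NormedAddCommGroup V] [InnerProductSpace ℝ V] [FiniteDimensional ℝ V]
    {d : ℕ} (hd : Module.finrank ℝ V = d)
    (P : V →ₗ[ℝ] V) (hP : Function.Bijective P)
    (v : Fin d → V) (lam : Fin d → ℝ)
    (hv : ∀ i, v i ≠ 0)
    (heig : ∀ i, P (v i) = lam i • v i)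
    (habs : ∀ i j, i ≠ j → |lam i| ≠ |lam j|) :
    ∀ ε > (0 : ℝ), ∃ N : ℕ, ∀ w : V, w ≠ 0 →
      ∃ n ≤ N, ∃ i : Fin d, projAngle ((P ^ n) w) (v i) < ε := by
  intro ε hε
  by_cases hV : ∀ w : V, w = 0
  · exact ⟨0, fun w hw => absurd (hV w) hw⟩
  push_neg at hV
  obtain ⟨w₀, hw₀⟩ := hV
  have hd1 : 0 < d := by
    rcases Nat.eq_zero_or_pos d with h | h
    · exfalso
      have h0 : Module.finrank ℝ V = 0 := by omega
      exact hw₀ ((Module.finrank_zero_iff.mp h0).elim w₀ 0)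
    · exact h
  haveI : Nonempty (Fin d) := ⟨⟨0, hd1⟩⟩
  have hlam : ∀ i, lam i ≠ 0 := by
    intro i hli
    apply hv i
    apply hP.injective
    rw [heig i, hli, zero_smul, map_zero]
  have heigvec : ∀ i, Module.End.HasEigenvector (P : Module.End ℝ V) (lam i) (v i) := fun i =>
    ⟨(Module.End.mem_eigenspace_iff).mpr (heig i), hv i⟩
  have hlaminj : Function.Injective lam := by
    intro i j hij
    by_contra h
    exact habs i j h (by rw [hij])
  have hli : LinearIndependent ℝ v :=
    Module.End.eigenvectors_linearIndependent' (P : Module.End ℝ V) lam hlaminj v heigvec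
  let b : Module.Basis (Fin d) ℝ V := basisOfLinearIndependentOfCardEqFinrank hli (by simp [hd])
  have hb : ∀ j, b j = v j := fun j => by
    simp [b, coe_basisOfLinearIndependentOfCardEqFinrank]
  -- P^n is injective
  have hPn : ∀ n : ℕ, ∀ x : V, x ≠ 0 → (P ^ n) x ≠ 0 := by
    intro n
    induction n with
    | zero => intro x hx; simpa using hx
    | succ n ih =>
      intro x hx
      rw [pow_succ, Module.End.mul_apply]
      intro h
      exact ih _ (fun h' => hx (hP.injective (by rw [h', map_zero]))) h
  -- pointwise statement
  have hpt : ∀ w : V, w ≠ 0 → ∃ n : ℕ, ∃ i : Fin d, projAngle ((P ^ n) w) (v i) < ε := by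
    intro w hw
    set c : Fin d →₀ ℝ := b.repr w with hc
    have hsupp : c.support.Nonempty := by
      rw [Finsupp.support_nonempty_iff]
      intro h
      rw [hc] at h
      exact hw (b.repr.map_eq_zero_iff.mp h)
    obtain ⟨i, hiS, hmax⟩ := c.support.exists_max_image (fun j => |lam j|) hsupp
    have hci : c i ≠ 0 := Finsupp.mem_support_iff.mp hiS
    have hPnw : ∀ n : ℕ, (P ^ n) w = ∑ j ∈ c.support, (c j * lam j ^ n) • v j := by
      intro n
      have hw' : w = ∑ j ∈ c.support, c j • v j := by
        conv_lhs => rw [← b.linearCombination_repr w]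
        rw [Finsupp.linearCombination_apply, Finsupp.sum]
        exact Finset.sum_congr rfl fun j _ => by rw [hb]
      rw [hw', map_sum]
      exact Finset.sum_congr rfl fun j _ => by
        rw [map_smul, (heigvec j).pow_apply n, smul_smul]
    have htend : Filter.Tendsto
        (fun n : ℕ => (c i * lam i ^ n)⁻¹ • (P ^ n) w) Filter.atTop (nhds (v i)) := by
      have key : ∀ n : ℕ, (c i * lam i ^ n)⁻¹ • (P ^ n) w =
          ∑ j ∈ c.support, ((c j / c i) * (lam j / lam i) ^ n) • v j := by
        intro n
        rw [hPnw n, Finset.smul_sum]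
        refine Finset.sum_congr rfl fun j _ => ?_
        rw [smul_smul]
        congr 1
        have h1 : lam i ≠ 0 := hlam i
        field_simp
        rw [div_pow, mul_comm (lam i ^ n), mul_assoc, mul_div_assoc', mul_div_cancel_left₀ _ (pow_ne_zero n h1)]
      simp_rw [key]
      have hlim : v i = ∑ j ∈ c.support, (if j = i then (1:ℝ) else 0) • v j := by
        rw [eq_comm]
        simp only [ite_smul, one_smul, zero_smul]
        rw [Finset.sum_ite_eq' c.support i (fun j => v j)]
        simp [hiS]
      rw [hlim]
      apply tendsto_finset_sum
      intro j hj
      by_cases hji : j = i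
      · subst hji
        simp only [if_pos rfl, eq_self_iff_true, if_true, div_self hci, div_self (hlam j),
          one_pow, mul_one, one_smul]
        exact tendsto_const_nhds
      · simp only [if_neg hji, zero_smul]
        have hr : ‖lam j / lam i‖ < 1 := by
          rw [Real.norm_eq_abs, abs_div, div_lt_one (abs_pos.mpr (hlam i))]
          exact lt_of_le_of_ne (hmax j hj) (habs j i hji)
        have h0 : Filter.Tendsto (fun n : ℕ => (lam j / lam i) ^ n) Filter.atTop (nhds 0) :=
          tendsto_pow_atTop_nhds_zero_of_norm_lt_one hr
        have := (h0.const_mul (c j / c i)).smul_const (v j)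
        simpa using this
    have hproj : Filter.Tendsto (fun n : ℕ => projAngle ((P ^ n) w) (v i))
        Filter.atTop (nhds 0) := by
      have hcont := projAngle_continuousAt (u := v i) (w := v i) (hv i) (hv i)
      have := (hcont.tendsto.comp htend)
      rw [projAngle_self (v i) (hv i)] at this
      refine this.congr fun n => ?_
      have hcn : (c i * lam i ^ n)⁻¹ ≠ 0 := by
        have h1 := hlam i
        positivity
      exact (projAngle_smul_left _ hcn _ _)
    have := hproj.eventually_lt_const hε
    obtain ⟨n, hn⟩ := this.exists
    exact ⟨n, i, hn⟩
  -- compactness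
  let A : ℕ → Set V := fun n =>
    (P ^ n) ⁻¹' (⋃ i, {u : V | u ≠ 0 ∧ projAngle u (v i) < ε})
  have hAopen : ∀ n, IsOpen (A n) := by
    intro n
    apply IsOpen.preimage (P ^ n).continuous_of_finiteDimensional
    apply isOpen_iUnion
    intro i
    have : {u : V | u ≠ 0 ∧ projAngle u (v i) < ε}
        = {u : V | u ≠ 0} ∩ (fun u : V => projAngle u (v i)) ⁻¹' Set.Iio ε := rfl
    rw [this]
    exact ContinuousOn.isOpen_inter_preimage
      (continuousOn_of_forall_continuousAt fun u hu => projAngle_continuousAt hu (hv i))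
      (isOpen_compl_singleton) isOpen_Iio
  have hcover : Metric.sphere (0:V) 1 ⊆ ⋃ n : ℕ, A n := by
    intro w hwS
    have hw : w ≠ 0 := by
      intro h
      rw [mem_sphere_zero_iff_norm, h, norm_zero] at hwS
      norm_num at hwS
    obtain ⟨n, i, hni⟩ := hpt w hw
    exact Set.mem_iUnion.mpr ⟨n, Set.mem_iUnion.mpr ⟨i, ⟨hPn n w hw, hni⟩⟩⟩
  obtain ⟨t, ht⟩ := (isCompact_sphere (0:V) 1).elim_finite_subcover A hAopen hcover
  refine ⟨t.sup id, fun w hw => ?_⟩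
  have hnw : ‖w‖ ≠ 0 := norm_ne_zero_iff.mpr hw
  have hwS : ‖w‖⁻¹ • w ∈ Metric.sphere (0:V) 1 := by
    rw [mem_sphere_zero_iff_norm, norm_smul, norm_inv, norm_norm, inv_mul_cancel₀ hnw]
  obtain ⟨n, hnt, hwA⟩ := Set.mem_iUnion₂.mp (ht hwS)
  obtain ⟨i, hi0, hiε⟩ := Set.mem_iUnion.mp hwA
  refine ⟨n, Finset.le_sup (f := id) hnt, i, ?_⟩
  rw [map_smul] at hiε
  rwa [projAngle_smul_left _ (inv_ne_zero hnw) _ _] at hiε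
end

section
/- For any d×d real matrix A and any 1 ≤ k ≤ d, the operator norm of the k-th exterior power A^∧k equals the product of the k largest singular values of A: ‖A^∧k‖ = α₁(A)⋯α_k(A). -/
/-- The singular values `α₁(A) ≥ α₂(A) ≥ …` of a real `d × d` matrix (0-indexed, listed in
non-increasing order): the square roots of the eigenvalues of `Aᵀ A`, padded by `0`. -/
noncomputable def svalN {d : ℕ} (A : Matrix (Fin d) (Fin d) ℝ) (m : ℕ) : ℝ :=
  if h : m < d then
    Real.sqrt ((Matrix.isHermitian_conjTranspose_mul_self A).eigenvalues
      (Tuple.sort (fun j => -(Matrix.isHermitian_conjTranspose_mul_self A).eigenvalues j) ⟨m, h⟩))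
  else 0

/-- The ℓ²-operator norm of a real matrix. -/
noncomputable def opNorm {m : Type*} [Fintype m] [DecidableEq m] (M : Matrix m m ℝ) : ℝ :=
  ‖LinearMap.toContinuousLinearMap (Matrix.toEuclideanLin M)‖

/-- The `k`-th compound matrix of `A`: the matrix of the exterior power `A^∧k` in the
orthonormal basis of wedges of standard basis vectors, indexed by `k`-element subsets of
`Fin d`; its `(S, T)` entry is the `k × k` minor `det A[S, T]`. -/
noncomputable def compound {d : ℕ} (k : ℕ) (A : Matrix (Fin d) (Fin d) ℝ) :
    Matrix {s : Finset (Fin d) // s.card = k} {s : Finset (Fin d) // s.card = k} ℝ :=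
  fun S T =>
    (A.submatrix (fun i : Fin k => ((S.1.orderIsoOfFin S.2 i : Fin d)))
      (fun j : Fin k => ((T.1.orderIsoOfFin T.2 j : Fin d)))).det


open Equiv Finset Matrix Function

section CB

variable {R : Type*} [CommRing R]

private lemma sum_perm_eq_zero {k m : Type*} [DecidableEq k] [Fintype k] [Fintype m]
    (M : Matrix k m R) (N : Matrix m k R) {p : k → m} (H : ¬Function.Injective p) :
    (∑ σ : Perm k, ((Perm.sign σ : ℤ) : R) * ∏ x, M (σ x) (p x) * N (p x) x) = 0 := by
  obtain ⟨i, j, hpij, hij⟩ : ∃ i j, p i = p j ∧ i ≠ j := by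
    rw [Function.Injective] at H
    push_neg at H
    obtain ⟨i, j, h1, h2⟩ := H
    exact ⟨i, j, h1, h2⟩
  exact Finset.sum_involution (fun σ _ => σ * Equiv.swap i j)
    (fun σ _ => by
      have : (∏ x, M (σ x) (p x)) = ∏ x, M ((σ * Equiv.swap i j) x) (p x) :=
        Fintype.prod_equiv (Equiv.swap i j) _ _ (by simp [Equiv.apply_swap_eq_self hpij])
      simp [this, Equiv.Perm.sign_swap hij, -Equiv.Perm.sign_swap', Finset.prod_mul_distrib])
    (fun σ _ _ => (not_congr Equiv.mul_swap_eq_iff).mpr hij) (fun _ _ => Finset.mem_univ _)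
    fun σ _ => Equiv.mul_swap_involutive i j σ

private lemma det_mul_expand {k m : Type*} [DecidableEq k] [Fintype k] [Fintype m] [DecidableEq m]
    (M : Matrix k m R) (N : Matrix m k R) :
    (M * N).det
      = ∑ p : k → m, ∑ σ : Perm k, ((Perm.sign σ : ℤ) : R) * ∏ i, M (σ i) (p i) * N (p i) i := by
  simp only [det_apply', mul_apply, prod_univ_sum, mul_sum, Fintype.piFinset_univ]
  rw [Finset.sum_comm]

end CB

variable {d k : ℕ}

/-- The increasing enumeration of a `k`-element subset of `Fin d`. -/
noncomputable def emb (S : {s : Finset (Fin d) // s.card = k}) : Fin k → Fin d :=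
  fun i => ((S.1.orderIsoOfFin S.2 i : Fin d))

lemma emb_strictMono (S : {s : Finset (Fin d) // s.card = k}) : StrictMono (emb S) := by
  have : emb S = S.1.orderEmbOfFin S.2 := by
    funext i; simp [emb, Finset.coe_orderIsoOfFin_apply]
  rw [this]
  exact (S.1.orderEmbOfFin S.2).strictMono

lemma emb_injective (S : {s : Finset (Fin d) // s.card = k}) : Function.Injective (emb S) :=
  (emb_strictMono S).injective

lemma emb_mem (S : {s : Finset (Fin d) // s.card = k}) (i : Fin k) : emb S i ∈ S.1 :=
  (S.1.orderIsoOfFin S.2 i).2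

lemma image_emb (S : {s : Finset (Fin d) // s.card = k}) :
    Finset.image (emb S) Finset.univ = S.1 := by
  ext x
  simp only [Finset.mem_image, Finset.mem_univ, true_and]
  constructor
  · rintro ⟨i, rfl⟩; exact emb_mem S i
  · intro hx
    exact ⟨(S.1.orderIsoOfFin S.2).symm ⟨x, hx⟩, by simp [emb]⟩

/-- The range of an injective tuple, as a `k`-element subset. -/
noncomputable def Sp (p : Fin k → Fin d) (hp : Function.Injective p) :
    {s : Finset (Fin d) // s.card = k} :=
  ⟨Finset.image p Finset.univ, by
    rw [Finset.card_image_of_injective _ hp, Finset.card_univ, Fintype.card_fin]⟩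

/-- The permutation of `Fin k` such that `p = emb (Sp p hp) ∘ qp p hp`. -/
noncomputable def qp (p : Fin k → Fin d) (hp : Function.Injective p) : Fin k → Fin k :=
  fun i => ((Sp p hp).1.orderIsoOfFin (Sp p hp).2).symm ⟨p i, by simp [Sp]⟩

lemma emb_Sp_qp (p : Fin k → Fin d) (hp : Function.Injective p) :
    emb (Sp p hp) ∘ qp p hp = p := by
  funext i
  simp [emb, qp]

lemma qp_bijective (p : Fin k → Fin d) (hp : Function.Injective p) :
    Function.Bijective (qp p hp) := by
  rw [← Finite.injective_iff_bijective]
  intro i j h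
  apply hp
  have := congrArg (fun z => (((Sp p hp).1.orderIsoOfFin (Sp p hp).2) z : Fin d)) h
  simpa [qp] using this

theorem cauchy_binet {R : Type*} [CommRing R] (M : Matrix (Fin k) (Fin d) R)
    (N : Matrix (Fin d) (Fin k) R) :
    (M * N).det = ∑ S : {s : Finset (Fin d) // s.card = k},
      (M.submatrix id (emb S)).det * (N.submatrix (emb S) id).det := by
  classical
  set F : (Fin k → Fin d) → R :=
    fun p => ∑ σ : Perm (Fin k), ((Perm.sign σ : ℤ) : R) * ∏ i, M (σ i) (p i) * N (p i) i with hF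
  have h1 : (M * N).det
      = ∑ p ∈ Finset.univ.filter (fun p : Fin k → Fin d => Injective p), F p := by
    rw [det_mul_expand]
    refine (Finset.sum_subset (Finset.filter_subset _ _) fun p _ hp => ?_).symm
    exact sum_perm_eq_zero M N (by simpa using hp)
  have h2 : ∀ S : {s : Finset (Fin d) // s.card = k},
      (M.submatrix id (emb S)).det * (N.submatrix (emb S) id).det
        = ∑ q ∈ Finset.univ.filter (fun q : Fin k → Fin k => Bijective q), F (emb S ∘ q) := by
    intro S
    rw [← det_mul, det_mul_expand]
    have e1 : ∀ q : Fin k → Fin k,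
        (∑ σ : Perm (Fin k), ((Perm.sign σ : ℤ) : R) *
          ∏ i, (M.submatrix id (emb S)) (σ i) (q i) * (N.submatrix (emb S) id) (q i) i)
        = F (emb S ∘ q) := fun q => by
      simp [hF, Function.comp, Matrix.submatrix_apply]
    rw [Finset.sum_congr rfl fun q _ => e1 q]
    refine (Finset.sum_subset (Finset.filter_subset _ _) fun q _ hq => ?_).symm
    have hq' : ¬ Injective q := fun h => by
      simp only [Finset.mem_filter, Finset.mem_univ, true_and] at hq
      exact hq ((Finite.injective_iff_bijective).mp h)
    have : ¬ Injective (emb S ∘ q) := fun h => hq' fun a b hab => h (by simp [Function.comp, hab])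
    simpa [hF, Function.comp] using sum_perm_eq_zero M N this
  have h3 : ∑ p ∈ Finset.univ.filter (fun p : Fin k → Fin d => Injective p), F p
      = ∑ x ∈ (Finset.univ : Finset {s : Finset (Fin d) // s.card = k}) ×ˢ
          (Finset.univ.filter (fun q : Fin k → Fin k => Bijective q)), F (emb x.1 ∘ x.2) := by
    refine Finset.sum_bij'
      (fun p hp => (Sp p (by simpa using hp), qp p (by simpa using hp)))
      (fun x _ => emb x.1 ∘ x.2) ?_ ?_ ?_ ?_ ?_
    · intro p hp
      simp only [Finset.mem_product, Finset.mem_univ, Finset.mem_filter, true_and]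
      exact qp_bijective p (by simpa using hp)
    · intro x hx
      simp only [Finset.mem_product, Finset.mem_univ, Finset.mem_filter, true_and] at hx
      simp only [Finset.mem_filter, Finset.mem_univ, true_and]
      exact (emb_injective x.1).comp hx.injective
    · intro p hp
      exact emb_Sp_qp p (by simpa using hp)
    · rintro ⟨S, q⟩ hx
      simp only [Finset.mem_product, Finset.mem_univ, Finset.mem_filter, true_and] at hx
      have hp : Injective (emb S ∘ q) := (emb_injective S).comp hx.injective
      have hS : Sp (emb S ∘ q) hp = S := by
        refine Subtype.ext ?_
        show Finset.image (emb S ∘ q) Finset.univ = S.1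
        rw [← Finset.image_image, Finset.image_univ_of_surjective hx.surjective, image_emb]
      have hq : qp (emb S ∘ q) hp = q := by
        funext i
        apply emb_injective (Sp (emb S ∘ q) hp)
        have e1 : emb (Sp (emb S ∘ q) hp) (qp (emb S ∘ q) hp i) = (emb S ∘ q) i :=
          congrFun (emb_Sp_qp _ hp) i
        rw [e1]
        show (emb S ∘ q) i = emb (Sp (emb S ∘ q) hp) (q i)
        rw [hS]
        rfl
      have : Sp (emb S ∘ q) (by simpa using hp) = Sp (emb S ∘ q) hp := rfl
      exact Prod.ext (this.trans hS) hq
    · intro p hp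
      exact congrArg F (emb_Sp_qp p (by simpa using hp)).symm
  rw [h1, h3, Finset.sum_product]
  exact Finset.sum_congr rfl fun S _ => (h2 S).symm

lemma compound_apply (A : Matrix (Fin d) (Fin d) ℝ) (S T : {s : Finset (Fin d) // s.card = k}) :
    compound k A S T = (A.submatrix (emb S) (emb T)).det := rfl

lemma compound_mul (A B : Matrix (Fin d) (Fin d) ℝ) :
    compound k (A * B) = compound k A * compound k B := by
  ext S T
  rw [compound_apply, Matrix.mul_apply]
  have h : (A * B).submatrix (emb S) (emb T)
      = (A.submatrix (emb S) id) * (B.submatrix id (emb T)) := by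
    ext i j
    simp [Matrix.mul_apply, Matrix.submatrix_apply]
  rw [h, cauchy_binet]
  refine Finset.sum_congr rfl fun R _ => ?_
  rw [compound_apply, compound_apply, Matrix.submatrix_submatrix, Matrix.submatrix_submatrix]
  simp only [Function.comp_id, Function.id_comp]

lemma compound_transpose (A : Matrix (Fin d) (Fin d) ℝ) :
    compound k Aᵀ = (compound k A)ᵀ := by
  ext S T
  rw [Matrix.transpose_apply, compound_apply, compound_apply, ← Matrix.det_transpose,
    Matrix.transpose_submatrix, Matrix.transpose_transpose]

lemma subset_exists_notmem {S T : {s : Finset (Fin d) // s.card = k}} (h : S ≠ T) :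
    ∃ x ∈ S.1, x ∉ T.1 := by
  by_contra hc
  push_neg at hc
  exact h (Subtype.ext (Finset.eq_of_subset_of_card_le hc (by rw [S.2, T.2])))

lemma compound_one : compound k (1 : Matrix (Fin d) (Fin d) ℝ) = 1 := by
  ext S T
  by_cases h : S = T
  · subst h
    rw [compound_apply, Matrix.one_apply_eq]
    have : (1 : Matrix (Fin d) (Fin d) ℝ).submatrix (emb S) (emb S)
        = (1 : Matrix (Fin k) (Fin k) ℝ) := by
      ext i j
      by_cases hij : i = j
      · subst hij; simp
      · rw [Matrix.submatrix_apply, Matrix.one_apply_ne hij,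
          Matrix.one_apply_ne (fun hc => hij (emb_injective S hc))]
    rw [this, Matrix.det_one]
  · rw [compound_apply, Matrix.one_apply_ne h]
    obtain ⟨x, hxS, hxT⟩ := subset_exists_notmem h
    have hi : emb S ((S.1.orderIsoOfFin S.2).symm ⟨x, hxS⟩) = x := by simp [emb]
    refine Matrix.det_eq_zero_of_row_eq_zero ((S.1.orderIsoOfFin S.2).symm ⟨x, hxS⟩) fun j => ?_
    rw [Matrix.submatrix_apply, hi]
    exact Matrix.one_apply_ne fun hc => hxT (hc ▸ emb_mem T j)

lemma compound_diagonal (v : Fin d → ℝ) :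
    compound k (Matrix.diagonal v)
      = Matrix.diagonal (fun S : {s : Finset (Fin d) // s.card = k} => ∏ x ∈ S.1, v x) := by
  ext S T
  by_cases h : S = T
  · subst h
    rw [compound_apply, Matrix.diagonal_apply_eq]
    have : (Matrix.diagonal v).submatrix (emb S) (emb S)
        = Matrix.diagonal (fun i => v (emb S i)) := by
      ext i j
      by_cases hij : i = j
      · subst hij; simp
      · rw [Matrix.submatrix_apply, Matrix.diagonal_apply_ne _ (fun hc => hij (emb_injective S hc)),
          Matrix.diagonal_apply_ne _ hij]
    rw [this, Matrix.det_diagonal, ← image_emb S,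
      Finset.prod_image (fun a _ b _ hab => emb_injective S hab)]
  · rw [compound_apply, Matrix.diagonal_apply_ne _ h]
    obtain ⟨x, hxS, hxT⟩ := subset_exists_notmem h
    have hi : emb S ((S.1.orderIsoOfFin S.2).symm ⟨x, hxS⟩) = x := by simp [emb]
    refine Matrix.det_eq_zero_of_row_eq_zero ((S.1.orderIsoOfFin S.2).symm ⟨x, hxS⟩) fun j => ?_
    rw [Matrix.submatrix_apply, hi]
    exact Matrix.diagonal_apply_ne _ fun hc => hxT (hc ▸ emb_mem T j)

open scoped Matrix.Norms.L2Operator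

section NormLemmas

variable {n : Type*} [Fintype n] [DecidableEq n]

lemma opNorm_eq (M : Matrix n n ℝ) : opNorm M = ‖M‖ := rfl

lemma mnorm_transpose (U : Matrix n n ℝ) : ‖Uᵀ‖ = ‖U‖ := by
  rw [← Matrix.conjTranspose_eq_transpose_of_trivial]
  exact Matrix.l2_opNorm_conjTranspose U

lemma mnorm_one [Nonempty n] : ‖(1 : Matrix n n ℝ)‖ = 1 := by
  have : Nontrivial (EuclideanSpace ℝ n) := by
    obtain ⟨i⟩ := ‹Nonempty n›
    refine ⟨0, EuclideanSpace.single i 1, fun h => ?_⟩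
    have h2 := congrArg (fun y : EuclideanSpace ℝ n => y i) h
    simp [EuclideanSpace.single_apply] at h2
  rw [Matrix.cstar_norm_def, _root_.map_one]
  exact ContinuousLinearMap.norm_id

lemma mnorm_unitary [Nonempty n] (U : Matrix n n ℝ) (h1 : Uᵀ * U = 1) : ‖U‖ = 1 := by
  have h := Matrix.l2_opNorm_conjTranspose_mul_self U
  rw [Matrix.conjTranspose_eq_transpose_of_trivial, h1, mnorm_one] at h
  rcases mul_self_eq_one_iff.mp h.symm with h' | h'
  · exact h'
  · nlinarith [norm_nonneg U]

lemma mnorm_conj [Nonempty n] (U D : Matrix n n ℝ) (h1 : Uᵀ * U = 1) :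
    ‖U * D * Uᵀ‖ = ‖D‖ := by
  have hU : ‖U‖ = 1 := mnorm_unitary U h1
  have hUt : ‖Uᵀ‖ = 1 := by rw [mnorm_transpose]; exact hU
  have le1 : ∀ X Y Z : Matrix n n ℝ, ‖X * Y * Z‖ ≤ ‖X‖ * ‖Y‖ * ‖Z‖ := fun X Y Z =>
    le_trans (Matrix.l2_opNorm_mul _ _)
      (mul_le_mul_of_nonneg_right (Matrix.l2_opNorm_mul _ _) (norm_nonneg _))
  refine le_antisymm ?_ ?_
  · have h3 := le1 U D Uᵀ
    rw [hU, hUt, one_mul, mul_one] at h3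
    exact h3
  · have hD : Uᵀ * (U * D * Uᵀ) * U = D := by
      have h4 : Uᵀ * (U * D * Uᵀ) * U = (Uᵀ * U) * D * (Uᵀ * U) := by noncomm_ring
      rw [h4, h1, one_mul, mul_one]
    calc ‖D‖ = ‖Uᵀ * (U * D * Uᵀ) * U‖ := by rw [hD]
    _ ≤ ‖Uᵀ‖ * ‖U * D * Uᵀ‖ * ‖U‖ := le1 _ _ _
    _ = ‖U * D * Uᵀ‖ := by rw [hU, hUt, one_mul, mul_one]

lemma mnorm_diagonal (v : n → ℝ) {c : ℝ} (hb : ∀ i, |v i| ≤ c) {i₀ : n} (hc : |v i₀| = c) :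
    ‖(Matrix.diagonal v : Matrix n n ℝ)‖ = c := by
  have hc0 : 0 ≤ c := hc ▸ abs_nonneg _
  refine le_antisymm ?_ ?_
  · rw [Matrix.l2_opNorm_def]
    refine ContinuousLinearMap.opNorm_le_bound _ hc0 fun x => ?_
    have hfx : ∀ i, ((Matrix.toEuclideanLin.trans LinearMap.toContinuousLinearMap)
        (Matrix.diagonal v) x) i = v i * x i := fun i => by
      simp [Matrix.toEuclideanLin_apply, Matrix.mulVec_diagonal]
    have h1 : ‖(Matrix.toEuclideanLin.trans LinearMap.toContinuousLinearMap)
        (Matrix.diagonal v) x‖ = Real.sqrt (∑ i, (v i * x i) ^ 2) := by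
      rw [EuclideanSpace.norm_eq]
      congr 1
      refine Finset.sum_congr rfl fun i _ => ?_
      rw [hfx, Real.norm_eq_abs, sq_abs]
    have h2 : ‖x‖ = Real.sqrt (∑ i, (x i) ^ 2) := by
      rw [EuclideanSpace.norm_eq]
      refine congrArg _ (Finset.sum_congr rfl fun i _ => ?_)
      rw [Real.norm_eq_abs, sq_abs]
    rw [h1, h2, ← Real.sqrt_sq hc0, ← Real.sqrt_mul (sq_nonneg c)]
    apply Real.sqrt_le_sqrt
    rw [Finset.mul_sum]
    refine Finset.sum_le_sum fun i _ => ?_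
    have hv : (v i) ^ 2 ≤ c ^ 2 := by
      rw [← sq_abs]
      exact pow_le_pow_left₀ (abs_nonneg _) (hb i) 2
    nlinarith [sq_nonneg (x i)]
  · have key := Matrix.l2_opNorm_mulVec (Matrix.diagonal v) (EuclideanSpace.single i₀ (1 : ℝ))
    rw [EuclideanSpace.norm_single, norm_one, mul_one] at key
    have hw : Matrix.diagonal v *ᵥ (EuclideanSpace.single i₀ (1 : ℝ)) = Pi.single i₀ (v i₀) := by
      funext i
      rw [Matrix.mulVec_diagonal, EuclideanSpace.single_apply, Pi.single_apply]
      by_cases h : i = i₀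
      · subst h; simp
      · simp [h]
    rw [hw] at key
    have heq : ((EuclideanSpace.equiv n ℝ).symm (Pi.single i₀ (v i₀)) : EuclideanSpace ℝ n)
        = EuclideanSpace.single i₀ (v i₀) := rfl
    rw [heq, EuclideanSpace.norm_single, Real.norm_eq_abs, hc] at key
    exact key

end NormLemmas

lemma strictMono_le_self {k d : ℕ} (f : Fin k → Fin d) (hf : StrictMono f) (i : Fin k) :
    (i : ℕ) ≤ (f i : ℕ) := by
  obtain ⟨m, hm⟩ := i
  induction m with
  | zero => exact Nat.zero_le _
  | succ n ih =>
    have h' : n < k := Nat.lt_of_succ_lt hm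
    have h1 : f ⟨n, h'⟩ < f ⟨n + 1, hm⟩ := hf (by simp [Fin.lt_def])
    have h2 := ih h'
    rw [Fin.lt_def] at h1
    simp only [Fin.val_mk] at h1 h2 ⊢
    omega

/-- For any `d × d` real matrix `A` and `1 ≤ k ≤ d`, the operator norm of the
`k`-th exterior power of `A` (represented by the compound matrix in the orthonormal wedge
basis) equals the product of the `k` largest singular values:
`‖A^∧k‖ = α₁(A) ⋯ α_k(A)`. -/
theorem stmt4 {d k : ℕ} (hk1 : 1 ≤ k) (hkd : k ≤ d) (A : Matrix (Fin d) (Fin d) ℝ) :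
    opNorm (compound k A) = ∏ i ∈ Finset.range k, svalN A i := by
  classical
  haveI hne : Nonempty {s : Finset (Fin d) // s.card = k} := by
    obtain ⟨t, _, ht⟩ := Finset.exists_subset_card_eq (s := (Finset.univ : Finset (Fin d)))
      (by simpa using hkd)
    exact ⟨⟨t, ht⟩⟩
  set lam : Fin d → ℝ := (Matrix.isHermitian_conjTranspose_mul_self A).eigenvalues with hlam
  set σ : Equiv.Perm (Fin d) := Tuple.sort (fun j => -(lam j)) with hσ
  have hsval : ∀ (m : ℕ) (h : m < d), svalN A m = Real.sqrt (lam (σ ⟨m, h⟩)) :=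
    fun m h => dif_pos h
  have hanti : ∀ a b : Fin d, a ≤ b → lam (σ b) ≤ lam (σ a) := fun a b hab => by
    have h := Tuple.monotone_sort (fun j => -(lam j)) hab
    simpa using h
  have hnn : ∀ i, 0 ≤ lam i := fun i =>
    Matrix.eigenvalues_conjTranspose_mul_self_nonneg A i
  set c : ℝ := ∏ i ∈ Finset.range k, svalN A i with hcdef
  have hsnn : ∀ m : ℕ, 0 ≤ svalN A m := fun m => by
    by_cases h : m < d
    · rw [hsval m h]; exact Real.sqrt_nonneg _
    · rw [svalN, dif_neg h]
  have hc0 : 0 ≤ c := Finset.prod_nonneg fun m _ => hsnn m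
  have hc2 : c ^ 2 = ∏ m : Fin k, lam (σ (Fin.castLE hkd m)) := by
    have h1 : c = ∏ m : Fin k, svalN A m.1 := by
      rw [hcdef, ← Fin.prod_univ_eq_prod_range]
    rw [h1, ← Finset.prod_pow]
    refine Finset.prod_congr rfl fun m _ => ?_
    rw [hsval m.1 (lt_of_lt_of_le m.2 hkd), Real.sq_sqrt (hnn _)]
    congr 1
  -- spectral decomposition of Aᴴ * A
  set W : Matrix (Fin d) (Fin d) ℝ :=
    ((Matrix.isHermitian_conjTranspose_mul_self A).eigenvectorUnitary : Matrix (Fin d) (Fin d) ℝ)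
    with hWdef
  have hW1 : Wᵀ * W = 1 := by
    have h := Matrix.mem_unitaryGroup_iff'.mp
      ((Matrix.isHermitian_conjTranspose_mul_self A).eigenvectorUnitary).2
    rwa [Matrix.star_eq_conjTranspose, Matrix.conjTranspose_eq_transpose_of_trivial] at h
  have hspec : Aᴴ * A = W * Matrix.diagonal lam * Wᵀ := by
    have h := (Matrix.isHermitian_conjTranspose_mul_self A).spectral_theorem
    have hdg : Matrix.diagonal (RCLike.ofReal ∘ (Matrix.isHermitian_conjTranspose_mul_self A).eigenvalues)
        = Matrix.diagonal lam := by
      congr 1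
    rw [Unitary.conjStarAlgAut_apply, Matrix.star_eq_conjTranspose] at h
    rw [← hWdef] at h
    rw [Matrix.conjTranspose_eq_transpose_of_trivial W] at h
    simp only [hdg] at h
    exact h
  have hCT : (compound k A)ᴴ * compound k A
      = compound k W * compound k (Matrix.diagonal lam) * (compound k W)ᵀ := by
    rw [Matrix.conjTranspose_eq_transpose_of_trivial, ← compound_transpose, ← compound_mul]
    rw [show Aᵀ * A = Aᴴ * A from by rw [Matrix.conjTranspose_eq_transpose_of_trivial],
      hspec, compound_mul, compound_mul, compound_transpose]
  have hC1 : (compound k W)ᵀ * compound k W = 1 := by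
    rw [← compound_transpose, ← compound_mul, hW1, compound_one]
  have key : ‖compound k A‖ * ‖compound k A‖ = ‖compound k (Matrix.diagonal lam)‖ := by
    rw [← Matrix.l2_opNorm_conjTranspose_mul_self, hCT, mnorm_conj _ _ hC1]
  -- the compound of the diagonal has operator norm `c ^ 2`
  have hinj0 : Function.Injective (fun m : Fin k => σ (Fin.castLE hkd m)) :=
    fun a b h => (Fin.castLE_injective hkd) (σ.injective h)
  have hS0card : (Finset.image (fun m : Fin k => σ (Fin.castLE hkd m)) Finset.univ).card = k := by
    rw [Finset.card_image_of_injective _ hinj0, Finset.card_univ, Fintype.card_fin]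
  have hdiag : ‖compound k (Matrix.diagonal lam)‖ = c ^ 2 := by
    rw [compound_diagonal]
    refine mnorm_diagonal _ (fun S => ?_)
      (i₀ := ⟨Finset.image (fun m : Fin k => σ (Fin.castLE hkd m)) Finset.univ, hS0card⟩) ?_
    · rw [abs_of_nonneg (Finset.prod_nonneg fun x _ => hnn x), hc2]
      set T : {s : Finset (Fin d) // s.card = k} := ⟨S.1.image σ.symm, by
        rw [Finset.card_image_of_injective _ σ.symm.injective, S.2]⟩ with hT
      have e1 : ∏ x ∈ S.1, lam x = ∏ m : Fin k, lam (σ (emb T m)) := by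
        have h1 : ∏ y ∈ T.1, lam (σ y) = ∏ x ∈ S.1, lam x := by
          rw [show T.1 = S.1.image σ.symm from rfl,
            Finset.prod_image (fun a _ b _ h => σ.symm.injective h)]
          exact Finset.prod_congr rfl fun x _ => by rw [Equiv.apply_symm_apply]
        rw [← h1, ← image_emb T, Finset.prod_image (fun a _ b _ h => emb_injective T h)]
      rw [e1]
      refine Finset.prod_le_prod (fun m _ => hnn _) fun m _ => ?_
      refine hanti _ _ ?_
      have h2 := strictMono_le_self (emb T) (emb_strictMono T) m
      rw [Fin.le_def]
      simpa using h2
    · rw [abs_of_nonneg (Finset.prod_nonneg fun x _ => hnn x), hc2,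
        Finset.prod_image (fun a _ b _ h => hinj0 h)]
  have hn : ‖compound k A‖ = c := by
    have hn2 : ‖compound k A‖ ^ 2 = c ^ 2 := by rw [sq, key, hdiag]
    have h := congrArg Real.sqrt hn2
    rwa [Real.sqrt_sq (norm_nonneg _), Real.sqrt_sq hc0] at h
  rw [opNorm_eq, hn]
end

section
/- Let ψ : L → ℝ≥0 be a submultiplicative function on the admissible words of a mixing subshift of finite type which is quasi-multiplicative with constants c > 0 and k ∈ ℕ, and suppose ψ(I) ≤ Υ^{|I|} for some Υ ≥ 1 and ψ(I) > 0 for all I. Then the sequence aₙ = log ∑_{I ∈ L(n)} ψ(I) is almost superadditive with constant C = log(c⁻¹ · ∑_{i=0}^{k} Υ^{i} · q^{i}), where q is the number of symbols; in particular lim aₙ/n exists and equals a finite number P with |P − aₜ/t| ≤ C/t for all t. -/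
/-- A word `w` of length `n` is admissible for the adjacency matrix `T` if all consecutive
transitions are allowed. -/
def AdmW {q : ℕ} (T : Fin q → Fin q → Bool) {n : ℕ} (w : Fin n → Fin q) : Prop :=
  ∀ (i : ℕ) (h : i + 1 < n), T (w ⟨i, by omega⟩) (w ⟨i + 1, h⟩) = true

open Classical in
/-- `∑_{I ∈ L(n)} ψ(I)`, the sum of `ψ` over all admissible words of length `n`. -/
noncomputable def wordSum (q : ℕ) (T : Fin q → Fin q → Bool)
    (ψ : ∀ n : ℕ, (Fin n → Fin q) → ℝ) (n : ℕ) : ℝ :=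
  ∑ w : Fin n → Fin q, if AdmW T w then ψ n w else 0

namespace S7
variable {q : ℕ} {T : Fin q → Fin q → Bool}

lemma append_raw_left {n m : ℕ} {α : Sort*} (u : Fin n → α) (v : Fin m → α) {i : ℕ}
    (h : i < n) (h' : i < n + m) : Fin.append u v ⟨i, h'⟩ = u ⟨i, h⟩ := by
  have : (⟨i, h'⟩ : Fin (n + m)) = Fin.castAdd m ⟨i, h⟩ := rfl
  rw [this, Fin.append_left]

lemma append_raw_right {n m : ℕ} {α : Sort*} (u : Fin n → α) (v : Fin m → α) {j : ℕ}
    (h : j < m) (h' : n + j < n + m) : Fin.append u v ⟨n + j, h'⟩ = v ⟨j, h⟩ := by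
  have : (⟨n + j, h'⟩ : Fin (n + m)) = Fin.natAdd n ⟨j, h⟩ := rfl
  rw [this, Fin.append_right]

lemma adm_extract {N : ℕ} {W : Fin N → Fin q} (hW : AdmW T W) (o n : ℕ) (h : o + n ≤ N) :
    AdmW T (fun j : Fin n => W ⟨o + j.1, by omega⟩) := fun i hi => hW (o + i) (by omega)

lemma psi_eq (ψ : ∀ n : ℕ, (Fin n → Fin q) → ℝ) {N M : ℕ} (h : N = M)
    {W : Fin N → Fin q} {V : Fin M → Fin q}
    (hWV : ∀ (a : ℕ) (hA : a < N) (hB : a < M), W ⟨a, hA⟩ = V ⟨a, hB⟩) : ψ N W = ψ M V := by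
  subst h; congr 1; funext j; exact hWV j.1 j.2 j.2

lemma adm_eq {N M : ℕ} (h : N = M) {W : Fin N → Fin q} {V : Fin M → Fin q}
    (hWV : ∀ (a : ℕ) (hA : a < N) (hB : a < M), W ⟨a, hA⟩ = V ⟨a, hB⟩)
    (hW : AdmW T W) : AdmW T V := by
  intro i hi
  rw [← hWV i (by omega) (by omega), ← hWV (i+1) (by omega) hi]
  exact hW i (by omega)

/-- Pointwise description of the append of prefix/suffix extraction. -/
lemma append_extract {N a b : ℕ} (hab : a + b = N) (W : Fin N → Fin q) :
    ∀ (i : ℕ) (hA : i < a + b) (hB : i < N),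
      Fin.append (fun j : Fin a => W ⟨j.1, by omega⟩) (fun j : Fin b => W ⟨a + j.1, by omega⟩)
        ⟨i, hA⟩ = W ⟨i, hB⟩ := by
  intro i hA hB
  rcases lt_or_ge i a with h1 | h1
  · rw [append_raw_left _ _ h1 hA]
  · obtain ⟨j, rfl⟩ : ∃ j, i = a + j := ⟨i - a, by omega⟩
    rw [append_raw_right _ _ (by omega) hA]

lemma psi_split (ψ : ∀ n : ℕ, (Fin n → Fin q) → ℝ)
    (hsub : ∀ (n m : ℕ) (wI : Fin n → Fin q) (wJ : Fin m → Fin q),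
      AdmW T (Fin.append wI wJ) → ψ (n + m) (Fin.append wI wJ) ≤ ψ n wI * ψ m wJ)
    {N a b : ℕ} (hab : a + b = N) (W : Fin N → Fin q) (hW : AdmW T W) :
    ψ N W ≤ ψ a (fun j : Fin a => W ⟨j.1, by omega⟩) * ψ b (fun j : Fin b => W ⟨a + j.1, by omega⟩) := by
  have he := append_extract hab W
  have hadm : AdmW T (Fin.append (fun j : Fin a => W ⟨j.1, by omega⟩)
      (fun j : Fin b => W ⟨a + j.1, by omega⟩)) :=
    adm_eq hab.symm (fun i hA hB => (he i hB hA).symm) hW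
  calc ψ N W = ψ (a + b) _ := psi_eq ψ hab.symm (fun i hA hB => (he i hB hA).symm)
    _ ≤ _ := hsub a b _ _ hadm


lemma adm_prefix {N : ℕ} {W : Fin N → Fin q} (hW : AdmW T W) (a : ℕ) (h : a ≤ N) :
    AdmW T (fun j : Fin a => W ⟨j.1, by omega⟩) := fun i hi => hW i (by omega)

open Classical in
lemma wordSum_prod (ψ : ∀ n : ℕ, (Fin n → Fin q) → ℝ) (n m : ℕ) :
    wordSum q T ψ n * wordSum q T ψ m =
      ∑ p : (Fin n → Fin q) × (Fin m → Fin q),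
        (if AdmW T p.1 then ψ n p.1 else 0) * (if AdmW T p.2 then ψ m p.2 else 0) := by
  rw [wordSum, wordSum, Finset.sum_mul_sum]
  exact (Fintype.sum_prod_type' (f := fun i j =>
    (if AdmW T i then ψ n i else 0) * (if AdmW T j then ψ m j else 0))).symm

open Finset in
/-- Submultiplicativity of wordSum. -/
lemma wordSum_submul (ψ : ∀ n : ℕ, (Fin n → Fin q) → ℝ)
    (hpos : ∀ (n : ℕ) (w : Fin n → Fin q), AdmW T w → 0 < ψ n w)
    (hsub : ∀ (n m : ℕ) (wI : Fin n → Fin q) (wJ : Fin m → Fin q),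
      AdmW T (Fin.append wI wJ) → ψ (n + m) (Fin.append wI wJ) ≤ ψ n wI * ψ m wJ)
    (n m : ℕ) : wordSum q T ψ (n + m) ≤ wordSum q T ψ n * wordSum q T ψ m := by
  classical
  have key : wordSum q T ψ (n + m) =
      ∑ p : (Fin n → Fin q) × (Fin m → Fin q),
        (if AdmW T (Fin.append p.1 p.2) then ψ (n+m) (Fin.append p.1 p.2) else 0) := by
    rw [wordSum]
    exact (Fintype.sum_equiv (Fin.appendEquiv n m) _ _ (fun p => rfl)).symm
  rw [key, wordSum_prod ψ n m]
  apply Finset.sum_le_sum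
  intro p _
  by_cases h : AdmW T (Fin.append p.1 p.2)
  · have h1 : AdmW T p.1 := by
      have := adm_extract (T := T) h 0 n (by omega)
      have e : (fun j : Fin n => Fin.append p.1 p.2 ⟨0 + j.1, by omega⟩) = p.1 := by
        funext j
        have : (0 + j.1 : ℕ) = j.1 := by omega
        simp only [this]
        rw [append_raw_left _ _ j.2]
      rwa [e] at this
    have h2 : AdmW T p.2 := by
      have := adm_extract (T := T) h n m (by omega)
      have e : (fun j : Fin m => Fin.append p.1 p.2 ⟨n + j.1, by omega⟩) = p.2 := by
        funext j
        rw [append_raw_right _ _ j.2]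
      rwa [e] at this
    rw [if_pos h, if_pos h1, if_pos h2]
    exact hsub n m p.1 p.2 h
  · rw [if_neg h]
    have hnn : ∀ (N : ℕ) (w : Fin N → Fin q), (0:ℝ) ≤ if AdmW T w then ψ N w else 0 :=
      fun N w => by split; exacts [(hpos _ _ ‹_›).le, le_rfl]
    exact mul_nonneg (hnn _ _) (hnn _ _)

lemma exists_adm (hq : 1 ≤ q) (τ : ℕ) (hτ : 1 ≤ τ)
    (hprim : ∀ a b : Fin q, ∃ w : Fin (τ + 1) → Fin q,
      AdmW T w ∧ w 0 = a ∧ w (Fin.last τ) = b) :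
    ∀ n : ℕ, 1 ≤ n → ∃ w : Fin n → Fin q, AdmW T w := by
  intro n hn
  induction n with
  | zero => omega
  | succ n IH =>
    rcases Nat.eq_or_lt_of_le hn with h1 | h1
    · exact ⟨fun _ => ⟨0, hq⟩, fun i hi => by omega⟩
    · obtain ⟨w, hw⟩ := IH (by omega)
      have hn1 : 1 ≤ n := by omega
      set a := w ⟨n - 1, by omega⟩ with ha
      obtain ⟨p, hp, hp0, _⟩ := hprim a a
      set b := p ⟨1, by omega⟩ with hb
      have hab : T a b = true := by
        have := hp 0 (by omega)
        rwa [show (⟨0, by omega⟩ : Fin (τ+1)) = 0 from rfl, hp0] at this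
      refine ⟨fun j => if h : j.1 < n then w ⟨j.1, h⟩ else b, ?_⟩
      intro i hi
      by_cases h2 : i + 1 < n
      · simp only [dif_pos h2, dif_pos (show i < n by omega)]
        exact hw i h2
      · have hin : i + 1 = n := by omega
        simp only [dif_pos (show i < n by omega), dif_neg (show ¬ (i + 1 < n) by omega)]
        have : (⟨i, by omega⟩ : Fin n) = ⟨n - 1, by omega⟩ := by
          ext; simp; omega
        rw [this, ← ha]
        exact hab

lemma wordSum_pos (ψ : ∀ n : ℕ, (Fin n → Fin q) → ℝ)
    (hpos : ∀ (n : ℕ) (w : Fin n → Fin q), AdmW T w → 0 < ψ n w)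
    {n : ℕ} (hex : ∃ w : Fin n → Fin q, AdmW T w) : 0 < wordSum q T ψ n := by
  classical
  obtain ⟨w, hw⟩ := hex
  rw [wordSum]
  apply Finset.sum_pos'
  · intro i _
    split
    · exact (hpos _ _ ‹_›).le
    · exact le_rfl
  · exact ⟨w, Finset.mem_univ w, by rw [if_pos hw]; exact hpos _ _ hw⟩

lemma wordSum_le (ψ : ∀ n : ℕ, (Fin n → Fin q) → ℝ) (Υ : ℝ) (hΥ : 1 ≤ Υ)
    (hbd : ∀ (n : ℕ) (w : Fin n → Fin q), AdmW T w → ψ n w ≤ Υ ^ n) (n : ℕ) :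
    wordSum q T ψ n ≤ (q : ℝ) ^ n * Υ ^ n := by
  classical
  rw [wordSum]
  calc ∑ w : Fin n → Fin q, (if AdmW T w then ψ n w else 0)
      ≤ ∑ _w : Fin n → Fin q, Υ ^ n := by
        apply Finset.sum_le_sum
        intro w _
        split
        · exact hbd n w ‹_›
        · positivity
    _ = (q : ℝ) ^ n * Υ ^ n := by
        rw [Finset.sum_const, Finset.card_univ]
        simp [Fintype.card_fun, mul_comm]

open Finset in
lemma wordSum_qm (hq : 1 ≤ q) (ψ : ∀ n : ℕ, (Fin n → Fin q) → ℝ)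
    (hpos : ∀ (n : ℕ) (w : Fin n → Fin q), AdmW T w → 0 < ψ n w)
    (hsub : ∀ (n m : ℕ) (wI : Fin n → Fin q) (wJ : Fin m → Fin q),
      AdmW T (Fin.append wI wJ) → ψ (n + m) (Fin.append wI wJ) ≤ ψ n wI * ψ m wJ)
    (Υ : ℝ) (hΥ : 1 ≤ Υ)
    (hbd : ∀ (n : ℕ) (w : Fin n → Fin q), AdmW T w → ψ n w ≤ Υ ^ n)
    (c : ℝ) (hc : 0 < c) (k : ℕ)
    (hqm : ∀ (n m : ℕ) (wI : Fin n → Fin q) (wJ : Fin m → Fin q), AdmW T wI → AdmW T wJ →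
      ∃ (nK : ℕ) (wK : Fin nK → Fin q), nK ≤ k ∧
        AdmW T (Fin.append (Fin.append wI wK) wJ) ∧
        c * ψ n wI * ψ m wJ ≤ ψ (n + nK + m) (Fin.append (Fin.append wI wK) wJ))
    (n m : ℕ) :
    c * (wordSum q T ψ n * wordSum q T ψ m) ≤
      (∑ i ∈ Finset.range (k + 1), Υ ^ i * (q : ℝ) ^ i) * wordSum q T ψ (n + m) := by
  classical
  have H : ∀ p : (Fin n → Fin q) × (Fin m → Fin q), ∃ (nK : ℕ) (wK : Fin nK → Fin q),
      nK ≤ k ∧ (AdmW T p.1 → AdmW T p.2 →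
        AdmW T (Fin.append (Fin.append p.1 wK) p.2) ∧
        c * ψ n p.1 * ψ m p.2 ≤ ψ (n + nK + m) (Fin.append (Fin.append p.1 wK) p.2)) := by
    intro p
    by_cases h : AdmW T p.1 ∧ AdmW T p.2
    · obtain ⟨nK, wK, h1, h2, h3⟩ := hqm n m p.1 p.2 h.1 h.2
      exact ⟨nK, wK, h1, fun _ _ => ⟨h2, h3⟩⟩
    · exact ⟨0, Fin.elim0, by omega, fun h1 h2 => absurd ⟨h1, h2⟩ h⟩
  choose nK wK hle hgood using H
  set W : ∀ p : (Fin n → Fin q) × (Fin m → Fin q), Fin (n + nK p + m) → Fin q :=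
    fun p => Fin.append (Fin.append p.1 (wK p)) p.2 with hW
  set V : ∀ p : (Fin n → Fin q) × (Fin m → Fin q), Fin (n + m) → Fin q :=
    fun p j => W p ⟨j.1, by omega⟩ with hV
  set f : (Fin n → Fin q) × (Fin m → Fin q) → ℝ :=
    fun p => (if AdmW T p.1 then ψ n p.1 else 0) * (if AdmW T p.2 then ψ m p.2 else 0) with hf
  set g : (Fin n → Fin q) × (Fin m → Fin q) → ℝ :=
    fun p => (if AdmW T (V p) then ψ (n + m) (V p) else 0) * Υ ^ (nK p) with hg
  -- pointwise bound
  have hfg : ∀ p, c * f p ≤ g p := by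
    intro p
    by_cases h : AdmW T p.1 ∧ AdmW T p.2
    · obtain ⟨hadmW, hineq⟩ := hgood p h.1 h.2
      have hVadm : AdmW T (V p) := adm_prefix hadmW (n + m) (by omega)
      have hsplit := psi_split ψ hsub (show (n + m) + nK p = n + nK p + m by omega) (W p) hadmW
      have hsufadm : AdmW T (fun j : Fin (nK p) => W p ⟨n + m + j.1, by omega⟩) :=
        adm_extract hadmW (n + m) (nK p) (by omega)
      have hsufbd : ψ (nK p) (fun j : Fin (nK p) => W p ⟨n + m + j.1, by omega⟩) ≤ Υ ^ (nK p) :=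
        hbd _ _ hsufadm
      have hVpos : 0 < ψ (n + m) (V p) := hpos _ _ hVadm
      calc c * f p = c * ψ n p.1 * ψ m p.2 := by rw [hf]; simp only [if_pos h.1, if_pos h.2]; ring
        _ ≤ ψ (n + nK p + m) (W p) := hineq
        _ ≤ ψ (n + m) (V p) * ψ (nK p) (fun j : Fin (nK p) => W p ⟨n + m + j.1, by omega⟩) :=
            hsplit
        _ ≤ ψ (n + m) (V p) * Υ ^ (nK p) := by
            exact mul_le_mul_of_nonneg_left hsufbd hVpos.le
        _ = g p := by rw [hg]; simp only [if_pos hVadm]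
    · have hf0 : f p = 0 := by
        rw [hf]
        rcases not_and_or.mp h with h' | h' <;> simp [if_neg h']
      rw [hf0, mul_zero, hg]
      have : (0:ℝ) ≤ if AdmW T (V p) then ψ (n + m) (V p) else 0 := by
        split
        · exact (hpos _ _ ‹_›).le
        · exact le_rfl
      positivity
  -- main chain
  rw [wordSum_prod ψ n m, Finset.mul_sum]
  show (∑ p : (Fin n → Fin q) × (Fin m → Fin q), c * f p) ≤ _
  have hmaps : ∀ p ∈ (univ : Finset ((Fin n → Fin q) × (Fin m → Fin q))),
      nK p ∈ Finset.range (k + 1) := fun p _ => Finset.mem_range.mpr (by have := hle p; omega)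
  rw [← Finset.sum_fiberwise_of_maps_to hmaps (fun p => c * f p), Finset.sum_mul]
  apply Finset.sum_le_sum
  intro i _
  -- per-fiber bound
  set Fib := Finset.filter (fun p => nK p = i) (univ : Finset ((Fin n → Fin q) × (Fin m → Fin q))) with hFib
  have step1 : ∑ p ∈ Fib, c * f p ≤ ∑ p ∈ Fib, g p := Finset.sum_le_sum (fun p _ => hfg p)
  have step2 : ∑ p ∈ Fib, g p =
      (∑ p ∈ Fib, (if AdmW T (V p) then ψ (n + m) (V p) else 0)) * Υ ^ i := by
    rw [Finset.sum_mul]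
    apply Finset.sum_congr rfl
    intro p hp
    have hpi : nK p = i := (Finset.mem_filter.mp hp).2
    rw [hg]
    simp only [hpi]
  -- the raw-index descriptions of W
  have hraw1 : ∀ (p : (Fin n → Fin q) × (Fin m → Fin q)) (x : Fin n) (h : x.1 < n + nK p + m),
      W p ⟨x.1, h⟩ = p.1 x := by
    intro p x h
    show Fin.append (Fin.append p.1 (wK p)) p.2 ⟨x.1, h⟩ = p.1 x
    rw [append_raw_left _ _ (show x.1 < n + nK p by omega),
        append_raw_left _ _ x.2, Fin.eta]
  have hraw2 : ∀ (p : (Fin n → Fin q) × (Fin m → Fin q)) (x : Fin m) (h : n + nK p + x.1 < n + nK p + m),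
      W p ⟨n + nK p + x.1, h⟩ = p.2 x := by
    intro p x h
    show Fin.append (Fin.append p.1 (wK p)) p.2 ⟨n + nK p + x.1, h⟩ = p.2 x
    rw [append_raw_right _ _ x.2, Fin.eta]
  set E : ∀ p : (Fin n → Fin q) × (Fin m → Fin q), Fin i → Fin q :=
    fun p j => if h : n + m + j.1 < n + nK p + m then W p ⟨n + m + j.1, h⟩ else ⟨0, hq⟩ with hE
  set φ : (Fin n → Fin q) × (Fin m → Fin q) → ((Fin (n + m) → Fin q) × (Fin i → Fin q)) :=
    fun p => (V p, E p) with hφ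
  have hinj : ∀ p ∈ Fib, ∀ p' ∈ Fib, φ p = φ p' → p = p' := by
    intro p hp p' hp' heq
    have hpi : nK p = i := (Finset.mem_filter.mp hp).2
    have hpi' : nK p' = i := (Finset.mem_filter.mp hp').2
    have hVeq : V p = V p' := congrArg Prod.fst heq
    have hEeq : E p = E p' := congrArg Prod.snd heq
    have hWeq : ∀ (a : ℕ) (hA : a < n + nK p + m) (hB : a < n + nK p' + m),
        W p ⟨a, hA⟩ = W p' ⟨a, hB⟩ := by
      intro a hA hB
      rcases lt_or_ge a (n + m) with h1 | h1
      · exact congrFun hVeq ⟨a, h1⟩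
      · have hj : a - (n + m) < i := by omega
        have := congrFun hEeq ⟨a - (n + m), hj⟩
        rw [hE] at this
        simp only at this
        rw [dif_pos (show n + m + (a - (n+m)) < n + nK p + m by omega),
            dif_pos (show n + m + (a - (n+m)) < n + nK p' + m by omega)] at this
        have e1 : (⟨n + m + (a - (n+m)), by omega⟩ : Fin (n + nK p + m)) = ⟨a, hA⟩ := by
          ext; simp; omega
        have e2 : (⟨n + m + (a - (n+m)), by omega⟩ : Fin (n + nK p' + m)) = ⟨a, hB⟩ := by
          ext; simp; omega
        rwa [e1, e2] at this
    have h1 : p.1 = p'.1 := by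
      funext x
      rw [← hraw1 p x (by omega), ← hraw1 p' x (by omega)]
      exact hWeq x.1 (by omega) (by omega)
    have h2 : p.2 = p'.2 := by
      funext x
      rw [← hraw2 p x (by omega), ← hraw2 p' x (by omega)]
      have : n + nK p' + x.1 = n + nK p + x.1 := by omega
      simp only [this]
      exact hWeq (n + nK p + x.1) (by omega) (by omega)
    exact Prod.ext h1 h2
  set G : ((Fin (n + m) → Fin q) × (Fin i → Fin q)) → ℝ :=
    fun v => if AdmW T v.1 then ψ (n + m) v.1 else 0 with hG
  have hGnn : ∀ v, 0 ≤ G v := by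
    intro v
    show (0:ℝ) ≤ if AdmW T v.1 then ψ (n + m) v.1 else 0
    split
    · exact (hpos _ _ ‹_›).le
    · exact le_rfl
  have step3 : ∑ p ∈ Fib, (if AdmW T (V p) then ψ (n + m) (V p) else 0) ≤
      (q : ℝ) ^ i * wordSum q T ψ (n + m) := by
    have e1 : ∑ p ∈ Fib, (if AdmW T (V p) then ψ (n + m) (V p) else 0) = ∑ p ∈ Fib, G (φ p) :=
      rfl
    rw [e1, ← Finset.sum_image hinj]
    calc ∑ v ∈ Fib.image φ, G v ≤ ∑ v : (Fin (n + m) → Fin q) × (Fin i → Fin q), G v :=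
          Finset.sum_le_sum_of_subset_of_nonneg (Finset.subset_univ _) (fun v _ _ => hGnn v)
      _ = (q : ℝ) ^ i * wordSum q T ψ (n + m) := by
          rw [show (∑ v : (Fin (n + m) → Fin q) × (Fin i → Fin q), G v) =
              ∑ a : Fin (n + m) → Fin q, ∑ _b : Fin i → Fin q,
                (if AdmW T a then ψ (n + m) a else 0) from Fintype.sum_prod_type G]
          have e3 : ∀ a : Fin (n + m) → Fin q,
              (∑ _b : Fin i → Fin q, (if AdmW T a then ψ (n + m) a else 0)) =
                (q : ℝ) ^ i * (if AdmW T a then ψ (n + m) a else 0) := by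
            intro a
            rw [Finset.sum_const, Finset.card_univ, nsmul_eq_mul]
            congr 1
            simp [Fintype.card_fun]
          rw [Finset.sum_congr rfl (fun a _ => e3 a), ← Finset.mul_sum, wordSum]
  have hS0 : (0:ℝ) ≤ Υ ^ i := by positivity
  calc ∑ p ∈ Fib, c * f p ≤ ∑ p ∈ Fib, g p := step1
    _ = (∑ p ∈ Fib, (if AdmW T (V p) then ψ (n + m) (V p) else 0)) * Υ ^ i := step2
    _ ≤ ((q : ℝ) ^ i * wordSum q T ψ (n + m)) * Υ ^ i := mul_le_mul_of_nonneg_right step3 hS0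
    _ = Υ ^ i * (q : ℝ) ^ i * wordSum q T ψ (n + m) := by ring

lemma c_le (hq : 1 ≤ q) (ψ : ∀ n : ℕ, (Fin n → Fin q) → ℝ)
    (hpos : ∀ (n : ℕ) (w : Fin n → Fin q), AdmW T w → 0 < ψ n w)
    (hsub : ∀ (n m : ℕ) (wI : Fin n → Fin q) (wJ : Fin m → Fin q),
      AdmW T (Fin.append wI wJ) → ψ (n + m) (Fin.append wI wJ) ≤ ψ n wI * ψ m wJ)
    (Υ : ℝ) (hΥ : 1 ≤ Υ)
    (hbd : ∀ (n : ℕ) (w : Fin n → Fin q), AdmW T w → ψ n w ≤ Υ ^ n)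
    (c : ℝ) (hc : 0 < c) (k : ℕ)
    (hqm : ∀ (n m : ℕ) (wI : Fin n → Fin q) (wJ : Fin m → Fin q), AdmW T wI → AdmW T wJ →
      ∃ (nK : ℕ) (wK : Fin nK → Fin q), nK ≤ k ∧
        AdmW T (Fin.append (Fin.append wI wK) wJ) ∧
        c * ψ n wI * ψ m wJ ≤ ψ (n + nK + m) (Fin.append (Fin.append wI wK) wJ)) :
    c ≤ Υ ^ k := by
  set I : Fin 1 → Fin q := fun _ => ⟨0, hq⟩ with hI
  have hIadm : AdmW T I := fun i hi => by omega
  obtain ⟨nK, wK, hle, hadm, hineq⟩ := hqm 1 1 I I hIadm hIadm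
  set W : Fin (1 + nK + 1) → Fin q := Fin.append (Fin.append I wK) I with hW
  have hIpos : 0 < ψ 1 I := hpos 1 I hIadm
  -- split off the last letter
  have h1 := psi_split ψ hsub (show (1 + nK) + 1 = 1 + nK + 1 by omega) W hadm
  -- the prefix of length 1 + nK
  set pre : Fin (1 + nK) → Fin q := fun j => W ⟨j.1, by omega⟩ with hpre
  have hpreadm : AdmW T pre := adm_prefix hadm (1 + nK) (by omega)
  have h2 := psi_split ψ hsub (show 1 + nK = 1 + nK from rfl) pre hpreadm
  -- identify pieces
  have hsufI : (fun j : Fin 1 => W ⟨1 + nK + j.1, by omega⟩) = I := by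
    funext j
    have hj : j.1 = 0 := by omega
    show W ⟨1 + nK + j.1, by omega⟩ = I j
    have e : (⟨1 + nK + j.1, by omega⟩ : Fin (1 + nK + 1)) = ⟨(1 + nK) + 0, by omega⟩ := by
      ext
      simp only [hj]
    rw [e, hW, append_raw_right _ _ (show 0 < 1 by omega)]
  have hpre1I : (fun j : Fin 1 => pre ⟨j.1, by omega⟩) = I := by
    funext j
    have hj : j.1 = 0 := by omega
    show W ⟨j.1, by omega⟩ = I j
    rw [hW, append_raw_left _ _ (show j.1 < 1 + nK by omega),
        append_raw_left _ _ (show j.1 < 1 by omega)]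
  have hmidadm : AdmW T (fun j : Fin nK => pre ⟨1 + j.1, by omega⟩) :=
    adm_extract hpreadm 1 nK (by omega)
  have hmidbd : ψ nK (fun j : Fin nK => pre ⟨1 + j.1, by omega⟩) ≤ Υ ^ nK := hbd _ _ hmidadm
  rw [hsufI] at h1
  rw [hpre1I] at h2
  -- chain
  have hprepos : 0 < ψ (1 + nK) pre := hpos _ _ hpreadm
  have hmidpos : 0 < ψ nK (fun j : Fin nK => pre ⟨1 + j.1, by omega⟩) := hpos _ _ hmidadm
  have key : c * ψ 1 I * ψ 1 I ≤ (ψ 1 I * Υ ^ nK) * ψ 1 I := by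
    calc c * ψ 1 I * ψ 1 I ≤ ψ (1 + nK + 1) W := hineq
      _ ≤ ψ (1 + nK) pre * ψ 1 I := h1
      _ ≤ (ψ 1 I * ψ nK (fun j : Fin nK => pre ⟨1 + j.1, by omega⟩)) * ψ 1 I :=
          mul_le_mul_of_nonneg_right h2 hIpos.le
      _ ≤ (ψ 1 I * Υ ^ nK) * ψ 1 I := by
          apply mul_le_mul_of_nonneg_right _ hIpos.le
          exact mul_le_mul_of_nonneg_left hmidbd hIpos.le
  have hcK : c ≤ Υ ^ nK := by
    have h3 := le_of_mul_le_mul_right key hIpos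
    have h4 : c * ψ 1 I ≤ Υ ^ nK * ψ 1 I := by linarith [h3]
    have := le_of_mul_le_mul_right h4 hIpos
    linarith
  calc c ≤ Υ ^ nK := hcK
    _ ≤ Υ ^ k := pow_le_pow_right₀ hΥ hle

end S7

open Filter in
/-- Let `ψ` be a positive submultiplicative function on the admissible words
of a mixing subshift of finite type (with `T^τ̄ > 0`) which is quasi-multiplicative with
constants `c > 0`, `k ∈ ℕ`, and satisfies `ψ(I) ≤ Υ^{|I|}` with `Υ ≥ 1`. Then
`aₙ = log ∑_{I ∈ L(n)} ψ(I)` is almost superadditive with constant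
`C = log (c⁻¹ ∑_{i=0}^k Υ^i q^i)`; in particular `lim aₙ/n` exists, is finite, and satisfies
`|P − aₜ/t| ≤ C/t` for all `t ≥ 1`. -/
theorem stmt7 (q : ℕ) (hq : 1 ≤ q) (T : Fin q → Fin q → Bool)
    (τ : ℕ) (hτ : 1 ≤ τ)
    (hprim : ∀ a b : Fin q, ∃ w : Fin (τ + 1) → Fin q,
      AdmW T w ∧ w 0 = a ∧ w (Fin.last τ) = b)
    (ψ : ∀ n : ℕ, (Fin n → Fin q) → ℝ)
    (hpos : ∀ (n : ℕ) (w : Fin n → Fin q), AdmW T w → 0 < ψ n w)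
    (hsub : ∀ (n m : ℕ) (wI : Fin n → Fin q) (wJ : Fin m → Fin q),
      AdmW T (Fin.append wI wJ) → ψ (n + m) (Fin.append wI wJ) ≤ ψ n wI * ψ m wJ)
    (Υ : ℝ) (hΥ : 1 ≤ Υ)
    (hbd : ∀ (n : ℕ) (w : Fin n → Fin q), AdmW T w → ψ n w ≤ Υ ^ n)
    (c : ℝ) (hc : 0 < c) (k : ℕ)
    (hqm : ∀ (n m : ℕ) (wI : Fin n → Fin q) (wJ : Fin m → Fin q), AdmW T wI → AdmW T wJ →
      ∃ (nK : ℕ) (wK : Fin nK → Fin q), nK ≤ k ∧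
        AdmW T (Fin.append (Fin.append wI wK) wJ) ∧
        c * ψ n wI * ψ m wJ ≤ ψ (n + nK + m) (Fin.append (Fin.append wI wK) wJ)) :
    (∀ n m : ℕ, 1 ≤ n → 1 ≤ m →
      Real.log (wordSum q T ψ n) + Real.log (wordSum q T ψ m) -
          Real.log (c⁻¹ * ∑ i ∈ Finset.range (k + 1), Υ ^ i * (q : ℝ) ^ i)
        ≤ Real.log (wordSum q T ψ (n + m))) ∧
    ∃ P : ℝ,
      Tendsto (fun n : ℕ => Real.log (wordSum q T ψ n) / n) atTop (nhds P) ∧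
      ∀ t : ℕ, 1 ≤ t →
        |P - Real.log (wordSum q T ψ t) / t| ≤
          Real.log (c⁻¹ * ∑ i ∈ Finset.range (k + 1), Υ ^ i * (q : ℝ) ^ i) / t := by
  classical
  set S : ℕ → ℝ := wordSum q T ψ with hS
  set a : ℕ → ℝ := fun n => Real.log (S n) with ha
  set Dsum : ℝ := ∑ i ∈ Finset.range (k + 1), Υ ^ i * (q : ℝ) ^ i with hDsum
  set C : ℝ := Real.log (c⁻¹ * Dsum) with hC
  have hΥ0 : (0:ℝ) < Υ := lt_of_lt_of_le one_pos hΥ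
  have hq0 : (0:ℝ) < (q:ℝ) := by exact_mod_cast hq
  have hq1 : (1:ℝ) ≤ (q:ℝ) := by exact_mod_cast hq
  -- positivity of S
  have hSpos : ∀ n : ℕ, 1 ≤ n → 0 < S n := fun n hn =>
    S7.wordSum_pos ψ hpos (S7.exists_adm hq τ hτ hprim n hn)
  -- c ≤ Υ ^ k and D ≥ 1
  have hck : c ≤ Υ ^ k := S7.c_le hq ψ hpos hsub Υ hΥ hbd c hc k hqm
  have hDsum_ge : Υ ^ k * (q:ℝ) ^ k ≤ Dsum := by
    rw [hDsum]
    apply Finset.single_le_sum (f := fun i => Υ ^ i * (q:ℝ) ^ i)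
    · intro i _
      positivity
    · exact Finset.self_mem_range_succ k
  have hDsum_pos : 0 < Dsum := lt_of_lt_of_le (by positivity) hDsum_ge
  have hcD : c ≤ Dsum := by
    refine le_trans ?_ hDsum_ge
    calc c ≤ Υ ^ k := hck
      _ ≤ Υ ^ k * (q:ℝ) ^ k := le_mul_of_one_le_right (by positivity) (one_le_pow₀ hq1)
  have hD1 : (1:ℝ) ≤ c⁻¹ * Dsum := by
    rw [← div_eq_inv_mul]
    exact (one_le_div hc).mpr hcD
  have hC0 : 0 ≤ C := Real.log_nonneg hD1
  have hDpos : (0:ℝ) < c⁻¹ * Dsum := by positivity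
  -- superadditivity with constant C
  have hsuper : ∀ n m : ℕ, 1 ≤ n → 1 ≤ m → a n + a m - C ≤ a (n + m) := by
    intro n m hn hm
    have hQM := S7.wordSum_qm hq ψ hpos hsub Υ hΥ hbd c hc k hqm n m
    have h1 : S n * S m ≤ (c⁻¹ * Dsum) * S (n + m) := by
      have h0 := mul_le_mul_of_nonneg_left hQM (inv_nonneg.2 hc.le)
      rw [← mul_assoc, inv_mul_cancel₀ hc.ne', one_mul] at h0
      rw [mul_assoc]
      exact h0
    have h2 : Real.log (S n * S m) ≤ Real.log ((c⁻¹ * Dsum) * S (n + m)) :=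
      Real.log_le_log (mul_pos (hSpos n hn) (hSpos m hm)) h1
    rw [Real.log_mul (hSpos n hn).ne' (hSpos m hm).ne',
        Real.log_mul hDpos.ne' (hSpos (n + m) (by omega)).ne'] at h2
    rw [ha, hC]
    simp only [hS] at h2 ⊢
    linarith
  refine ⟨fun n m hn hm => hsuper n m hn hm, ?_⟩
  -- upper bound on a n
  have hM : ∀ n : ℕ, 1 ≤ n → a n ≤ (n:ℝ) * (Real.log q + Real.log Υ) := by
    intro n hn
    have h1 : S n ≤ (q:ℝ) ^ n * Υ ^ n := S7.wordSum_le ψ Υ hΥ hbd n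
    have h2 := Real.log_le_log (hSpos n hn) h1
    rw [Real.log_mul (by positivity) (by positivity), Real.log_pow, Real.log_pow] at h2
    rw [ha]
    simp only [hS] at h2 ⊢
    linarith
  set M : ℝ := Real.log q + Real.log Υ with hMdef
  have hM0 : 0 ≤ M := add_nonneg (Real.log_nonneg hq1) (Real.log_nonneg hΥ)
  -- lower bound on a n
  have hlow : ∀ n : ℕ, 1 ≤ n → (n:ℝ) * (a 1 - C) ≤ a n := by
    intro n hn
    induction n with
    | zero => omega
    | succ n IH =>
      rcases Nat.lt_or_ge 1 (n + 1) with h1 | h1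
      · have hn1 : 1 ≤ n := by omega
        have h2 := hsuper n 1 hn1 le_rfl
        have IH' := IH hn1
        push_cast
        push_cast at IH'
        linarith
      · have : n = 0 := by omega
        subst this
        push_cast
        linarith [hC0]
  -- subadditive sequences
  set u : ℕ → ℝ := fun n => if n = 0 then 0 else a n with hu
  have hu_sub : Subadditive u := by
    intro x y
    rcases Nat.eq_zero_or_pos x with rfl | hx
    · simp [hu]
    rcases Nat.eq_zero_or_pos y with rfl | hy
    · simp [hu]
    · simp only [hu, if_neg (by omega : x + y ≠ 0), if_neg (by omega : x ≠ 0),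
        if_neg (by omega : y ≠ 0)]
      have h1 : S (x + y) ≤ S x * S y := S7.wordSum_submul ψ hpos hsub x y
      have h2 := Real.log_le_log (hSpos _ (by omega)) h1
      rw [Real.log_mul (hSpos x hx).ne' (hSpos y hy).ne'] at h2
      exact h2
  have hu_bdd : BddBelow (Set.range fun n : ℕ => u n / n) := by
    refine ⟨min 0 (a 1 - C), ?_⟩
    rintro x ⟨n, rfl⟩
    rcases Nat.eq_zero_or_pos n with rfl | hn
    · simp only [hu, if_pos rfl, Nat.cast_zero, zero_div]
      exact min_le_left _ _
    · have h1 := hlow n hn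
      have hn0 : (0:ℝ) < n := by exact_mod_cast hn
      simp only [hu, if_neg (by omega : n ≠ 0)]
      calc min 0 (a 1 - C) ≤ a 1 - C := min_le_right _ _
        _ ≤ a n / n := by rw [le_div_iff₀ hn0]; nlinarith [h1]
  have htend_u := hu_sub.tendsto_lim hu_bdd
  set L : ℝ := hu_sub.lim with hL
  have htend_a : Tendsto (fun n : ℕ => a n / n) atTop (nhds L) := by
    apply htend_u.congr'
    filter_upwards [eventually_ge_atTop 1] with n hn
    simp only [hu, if_neg (by omega : n ≠ 0)]
  -- the reversed sequence
  set v : ℕ → ℝ := fun n => if n = 0 then 0 else C - a n with hv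
  have hv_sub : Subadditive v := by
    intro x y
    rcases Nat.eq_zero_or_pos x with rfl | hx
    · simp [hv]
    rcases Nat.eq_zero_or_pos y with rfl | hy
    · simp [hv]
    · simp only [hv, if_neg (by omega : x + y ≠ 0), if_neg (by omega : x ≠ 0),
        if_neg (by omega : y ≠ 0)]
      have h2 := hsuper x y hx hy
      linarith
  have hv_bdd : BddBelow (Set.range fun n : ℕ => v n / n) := by
    refine ⟨-M, ?_⟩
    rintro x ⟨n, rfl⟩
    rcases Nat.eq_zero_or_pos n with rfl | hn
    · simp only [hv, if_pos rfl, Nat.cast_zero, zero_div]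
      linarith
    · have h1 := hM n hn
      have hn0 : (0:ℝ) < n := by exact_mod_cast hn
      simp only [hv, if_neg (by omega : n ≠ 0)]
      rw [le_div_iff₀ hn0]
      nlinarith [h1, hC0, hM0]
  have htend_v := hv_sub.tendsto_lim hv_bdd
  have htend_v' : Tendsto (fun n : ℕ => v n / n) atTop (nhds (0 - L)) := by
    have h1 : Tendsto (fun n : ℕ => C / n - a n / n) atTop (nhds (0 - L)) :=
      (tendsto_const_div_atTop_nhds_zero_nat C).sub htend_a
    apply h1.congr'
    filter_upwards [eventually_ge_atTop 1] with n hn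
    simp only [hv, if_neg (by omega : n ≠ 0)]
    rw [sub_div]
  have hLv : hv_sub.lim = -L := by
    have := tendsto_nhds_unique htend_v htend_v'
    rw [this, zero_sub]
  refine ⟨L, htend_a, ?_⟩
  intro t ht
  have ht0 : (0:ℝ) < t := by exact_mod_cast ht
  have hCt : 0 ≤ C / t := div_nonneg hC0 ht0.le
  have hb1 : L ≤ a t / t := by
    have := hu_sub.lim_le_div hu_bdd (n := t) (by omega)
    simp only [hu, if_neg (by omega : t ≠ 0)] at this
    exact this
  have hb2 : a t / t - C / t ≤ L := by
    have h3 := hv_sub.lim_le_div hv_bdd (n := t) (by omega)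
    simp only [hv, if_neg (by omega : t ≠ 0)] at h3
    rw [hLv, sub_div] at h3
    linarith
  rw [abs_le]
  constructor
  · linarith
  · linarith
end

section
/- Define N_i = ⌊γ i⌋ for i odd and N_i = ⌊(1−γ) i⌋ for i even, where γ ∈ (0,1). Then: (a) N_i → ∞; (b) (i+1)N_{i+1} / ∑_{j=1}^{i} jN_j → 0; and (c) ∑_{j=1}^{i} (2j−1)N_{2j−1} / ∑_{j=1}^{2i} jN_j → γ as i → ∞. -/
open Filter

set_option maxHeartbeats 1000000

lemma aux_sum_sq (i : ℕ) : ∑ j ∈ Finset.Icc 1 i, ((j:ℝ))^2 = i*(i+1)*(2*i+1)/6 := by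
  induction i with
  | zero => simp
  | succ n ih =>
    rw [Finset.sum_Icc_succ_top (by omega), ih]
    push_cast; ring

lemma aux_sum_id (i : ℕ) : ∑ j ∈ Finset.Icc 1 i, (j:ℝ) = i*(i+1)/2 := by
  induction i with
  | zero => simp
  | succ n ih =>
    rw [Finset.sum_Icc_succ_top (by omega), ih]
    push_cast; ring

lemma aux_sum_odd_sq (i : ℕ) :
    ∑ j ∈ Finset.Icc 1 i, (2*(j:ℝ)-1)^2 = (4*(i:ℝ)^3 - i)/3 := by
  induction i with
  | zero => simp
  | succ n ih =>
    rw [Finset.sum_Icc_succ_top (by omega), ih]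
    push_cast; ring

lemma aux_sum_odd (i : ℕ) : ∑ j ∈ Finset.Icc 1 i, (2*(j:ℝ)-1) = (i:ℝ)^2 := by
  induction i with
  | zero => simp
  | succ n ih =>
    rw [Finset.sum_Icc_succ_top (by omega), ih]
    push_cast; ring

lemma aux_sum_if (γ : ℝ) (i : ℕ) :
    ∑ j ∈ Finset.Icc 1 (2*i), (if Odd j then γ else 1-γ) * (j:ℝ)^2
      = γ * ((4*(i:ℝ)^3 - i)/3) + (1-γ) * (2*i*(i+1)*(2*i+1)/3) := by
  induction i with
  | zero => simp
  | succ n ih =>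
    have h : 2*(n+1) = 2*n+1+1 := by ring
    rw [h, Finset.sum_Icc_succ_top (by omega), Finset.sum_Icc_succ_top (by omega), ih]
    have h1 : Odd (2*n+1) := ⟨n, by ring⟩
    have h2 : ¬ Odd (2*n+1+1) := by rw [Nat.odd_iff]; omega
    simp only [h1, h2, if_true, if_false]
    push_cast; ring

lemma aux_small (b c d : ℝ) :
    Tendsto (fun x : ℝ => b/x + c/x^2 + d/x^3) atTop (nhds 0) := by
  have hid : Tendsto (fun x : ℝ => x) atTop atTop := tendsto_id
  have h1 : Tendsto (fun x : ℝ => b/x) atTop (nhds 0) :=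
    hid.const_div_atTop b
  have h2 : Tendsto (fun x : ℝ => c/x^2) atTop (nhds 0) :=
    (tendsto_pow_atTop two_ne_zero).const_div_atTop c
  have h3 : Tendsto (fun x : ℝ => d/x^3) atTop (nhds 0) :=
    (tendsto_pow_atTop three_ne_zero).const_div_atTop d
  simpa using (h1.add h2).add h3

lemma aux_cubic_atTop (a b c d : ℝ) (ha : 0 < a) :
    Tendsto (fun i : ℕ => a*(i:ℝ)^3+b*(i:ℝ)^2+c*(i:ℝ)+d) atTop atTop := by
  have hg : Tendsto (fun x : ℝ => a + (b/x + c/x^2 + d/x^3)) atTop (nhds a) := by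
    simpa using (tendsto_const_nhds.add (aux_small b c d))
  have hf : Tendsto (fun x : ℝ => x^3) atTop atTop := tendsto_pow_atTop three_ne_zero
  have h := hf.atTop_mul_pos ha hg
  have h' : Tendsto (fun x : ℝ => a*x^3+b*x^2+c*x+d) atTop atTop := by
    refine h.congr' ?_
    filter_upwards [eventually_gt_atTop (0:ℝ)] with x hx
    field_simp
    ring
  exact h'.comp tendsto_natCast_atTop_atTop

lemma aux_div_tendsto (a b c d a' b' c' d' : ℝ) (ha' : a' ≠ 0) :
    Tendsto (fun i : ℕ =>
      (a*(i:ℝ)^3+b*(i:ℝ)^2+c*(i:ℝ)+d)/(a'*(i:ℝ)^3+b'*(i:ℝ)^2+c'*(i:ℝ)+d'))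
      atTop (nhds (a/a')) := by
  have hnum : Tendsto (fun x : ℝ => a + (b/x + c/x^2 + d/x^3)) atTop (nhds a) := by
    simpa using (tendsto_const_nhds.add (aux_small b c d))
  have hden : Tendsto (fun x : ℝ => a' + (b'/x + c'/x^2 + d'/x^3)) atTop (nhds a') := by
    simpa using (tendsto_const_nhds.add (aux_small b' c' d'))
  have h := hnum.div hden ha'
  have h' : Tendsto (fun x : ℝ =>
      (a*x^3+b*x^2+c*x+d)/(a'*x^3+b'*x^2+c'*x+d')) atTop (nhds (a/a')) := by
    refine h.congr' ?_
    filter_upwards [eventually_gt_atTop (0:ℝ)] with x hx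
    have hx3 : x^3 ≠ 0 := by positivity
    have e1 : a + (b/x + c/x^2 + d/x^3) = (a*x^3+b*x^2+c*x+d)/x^3 := by
      field_simp; ring
    have e2 : a' + (b'/x + c'/x^2 + d'/x^3) = (a'*x^3+b'*x^2+c'*x+d')/x^3 := by
      field_simp; ring
    simp only [Pi.div_apply]
    rw [e1, e2, div_div_div_cancel_right₀ hx3]
  exact h'.comp tendsto_natCast_atTop_atTop

/-- For `γ ∈ (0,1)` let `N i = ⌊γ i⌋` for `i` odd and `N i = ⌊(1−γ) i⌋`
for `i` even. Then (a) `N i → ∞`; (b) `(i+1) N (i+1) / ∑_{j=1}^i j N j → 0`; and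
(c) `∑_{j=1}^i (2j−1) N (2j−1) / ∑_{j=1}^{2i} j N j → γ`. -/
theorem stmt15 (γ : ℝ) (hγ : γ ∈ Set.Ioo (0 : ℝ) 1) (N : ℕ → ℕ)
    (hodd : ∀ i : ℕ, Odd i → N i = ⌊γ * i⌋₊)
    (heven : ∀ i : ℕ, Even i → N i = ⌊(1 - γ) * i⌋₊) :
    Tendsto N atTop atTop ∧
    Tendsto (fun i : ℕ =>
        (((i + 1) * N (i + 1) : ℕ) : ℝ) / ((∑ j ∈ Finset.Icc 1 i, j * N j : ℕ) : ℝ))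
      atTop (nhds 0) ∧
    Tendsto (fun i : ℕ =>
        ((∑ j ∈ Finset.Icc 1 i, (2 * j - 1) * N (2 * j - 1) : ℕ) : ℝ) /
          ((∑ j ∈ Finset.Icc 1 (2 * i), j * N j : ℕ) : ℝ))
      atTop (nhds γ) := by
  obtain ⟨hγ0, hγ1⟩ := hγ
  set m : ℝ := min γ (1-γ) with hm_def
  have hm : 0 < m := lt_min hγ0 (by linarith)
  have hN : ∀ i : ℕ, N i = ⌊(if Odd i then γ else 1-γ) * i⌋₊ := by
    intro i
    rcases Nat.even_or_odd i with hi | hi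
    · rw [if_neg (Nat.not_odd_iff_even.mpr hi), heven i hi]
    · rw [if_pos hi, hodd i hi]
  have hc0 : ∀ i : ℕ, 0 ≤ (if Odd i then γ else 1-γ) := by
    intro i; split_ifs <;> linarith
  have hc1 : ∀ i : ℕ, (if Odd i then γ else 1-γ) ≤ 1 := by
    intro i; split_ifs <;> linarith
  have hcm : ∀ i : ℕ, m ≤ (if Odd i then γ else 1-γ) := by
    intro i; split_ifs
    · exact min_le_left _ _
    · exact min_le_right _ _
  have key : ∀ j : ℕ,
      ((if Odd j then γ else 1-γ) * (j:ℝ)^2 - j ≤ (j:ℝ) * (N j : ℝ)) ∧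
      ((j:ℝ) * (N j : ℝ) ≤ (if Odd j then γ else 1-γ) * (j:ℝ)^2) := by
    intro j
    rw [hN j]
    set cj : ℝ := if Odd j then γ else 1-γ with hcj
    have h0 : 0 ≤ cj := hc0 j
    have h1 : ((⌊cj * j⌋₊ : ℕ):ℝ) ≤ cj * j := Nat.floor_le (by positivity)
    have h2 : cj * j - 1 < ((⌊cj * j⌋₊ : ℕ):ℝ) := Nat.sub_one_lt_floor _
    have hj0 : (0:ℝ) ≤ j := Nat.cast_nonneg j
    constructor <;> nlinarith
  -- casts of the sums
  have hScast : ∀ i : ℕ, ((∑ j ∈ Finset.Icc 1 i, j * N j : ℕ):ℝ)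
      = ∑ j ∈ Finset.Icc 1 i, (j:ℝ) * (N j : ℝ) := by
    intro i; push_cast; rfl
  -- part (a)
  have parta : Tendsto N atTop atTop := by
    refine tendsto_atTop_atTop.mpr fun b => ⟨⌈(b:ℝ)/m⌉₊, fun i hi => ?_⟩
    rw [hN i]
    apply Nat.le_floor
    have h1 : (b:ℝ)/m ≤ i := le_trans (Nat.le_ceil _) (Nat.cast_le.mpr hi)
    have h2 : (b:ℝ) ≤ m * i := by
      rw [div_le_iff₀ hm] at h1; linarith [h1]
    calc (b:ℝ) ≤ m * i := h2
      _ ≤ (if Odd i then γ else 1-γ) * i :=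
        mul_le_mul_of_nonneg_right (hcm i) (Nat.cast_nonneg i)
  -- lower bound for the denominator sum
  have hSlb : ∀ i : ℕ, m * ((i:ℝ)*(i+1)*(2*i+1)/6) - (i:ℝ)*(i+1)/2
      ≤ ((∑ j ∈ Finset.Icc 1 i, j * N j : ℕ):ℝ) := by
    intro i
    rw [hScast]
    have step : ∀ j ∈ Finset.Icc 1 i, m*(j:ℝ)^2 - j ≤ (j:ℝ) * (N j : ℝ) := by
      intro j _
      refine le_trans ?_ (key j).1
      have := hcm j
      nlinarith [sq_nonneg (j:ℝ)]
    calc m * ((i:ℝ)*(i+1)*(2*i+1)/6) - (i:ℝ)*(i+1)/2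
        = ∑ j ∈ Finset.Icc 1 i, (m*(j:ℝ)^2 - j) := by
          rw [Finset.sum_sub_distrib, ← Finset.mul_sum, aux_sum_sq, aux_sum_id]
      _ ≤ _ := Finset.sum_le_sum step
  -- part (b)
  have partb : Tendsto (fun i : ℕ =>
      (((i + 1) * N (i + 1) : ℕ) : ℝ) / ((∑ j ∈ Finset.Icc 1 i, j * N j : ℕ) : ℝ))
      atTop (nhds 0) := by
    have hnum : ∀ i : ℕ, (((i + 1) * N (i + 1) : ℕ) : ℝ) ≤ ((i:ℝ)+1)^2 := by
      intro i
      have h := (key (i+1)).2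
      have hcle := hc1 (i+1)
      push_cast at h ⊢
      nlinarith [sq_nonneg ((i:ℝ)+1)]
    have hbound : Tendsto (fun i : ℕ =>
        (0*(i:ℝ)^3+1*(i:ℝ)^2+2*(i:ℝ)+1)/((m/3)*(i:ℝ)^3+(m/2-1/2)*(i:ℝ)^2+(m/6-1/2)*(i:ℝ)+0))
        atTop (nhds 0) := by
      have := aux_div_tendsto 0 1 2 1 (m/3) (m/2-1/2) (m/6-1/2) 0 (by positivity)
      rwa [zero_div] at this
    have hdenTop : Tendsto (fun i : ℕ =>
        (m/3)*(i:ℝ)^3+(m/2-1/2)*(i:ℝ)^2+(m/6-1/2)*(i:ℝ)+0) atTop atTop :=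
      aux_cubic_atTop _ _ _ _ (by positivity)
    refine tendsto_of_tendsto_of_tendsto_of_le_of_le' tendsto_const_nhds hbound ?_ ?_
    · exact Eventually.of_forall fun i =>
        div_nonneg (Nat.cast_nonneg _) (Nat.cast_nonneg _)
    · filter_upwards [hdenTop.eventually_gt_atTop 0] with i hpos
      have hle : (m/3)*(i:ℝ)^3+(m/2-1/2)*(i:ℝ)^2+(m/6-1/2)*(i:ℝ)+0
          ≤ ((∑ j ∈ Finset.Icc 1 i, j * N j : ℕ):ℝ) := by
        refine le_trans (le_of_eq ?_) (hSlb i)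
        ring
      have hnum' : (((i + 1) * N (i + 1) : ℕ) : ℝ)
          ≤ 0*(i:ℝ)^3+1*(i:ℝ)^2+2*(i:ℝ)+1 :=
        le_trans (hnum i) (le_of_eq (by ring))
      exact div_le_div₀ (le_trans (Nat.cast_nonneg _) hnum') hnum' hpos hle
  -- part (c)
  have hAcast : ∀ i : ℕ, ((∑ j ∈ Finset.Icc 1 i, (2 * j - 1) * N (2 * j - 1) : ℕ):ℝ)
      = ∑ j ∈ Finset.Icc 1 i, (((2*j-1 : ℕ)):ℝ) * (N (2*j-1) : ℝ) := by
    intro i; push_cast; rfl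
  have hcast2 : ∀ j : ℕ, 1 ≤ j → (((2*j-1 : ℕ)):ℝ) = 2*(j:ℝ)-1 := by
    intro j hj
    have h1 : 1 ≤ 2*j := by omega
    rw [Nat.cast_sub h1]; push_cast; ring
  have hkeyodd : ∀ j : ℕ, 1 ≤ j →
      (γ * (2*(j:ℝ)-1)^2 - (2*(j:ℝ)-1) ≤ (2*(j:ℝ)-1) * (N (2*j-1) : ℝ)) ∧
      ((2*(j:ℝ)-1) * (N (2*j-1) : ℝ) ≤ γ * (2*(j:ℝ)-1)^2) := by
    intro j hj
    have hodd' : Odd (2*j-1) := ⟨j-1, by omega⟩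
    have h := key (2*j-1)
    rw [if_pos hodd', hcast2 j hj] at h
    exact h
  have hAub : ∀ i : ℕ, ((∑ j ∈ Finset.Icc 1 i, (2 * j - 1) * N (2 * j - 1) : ℕ):ℝ)
      ≤ γ * ((4*(i:ℝ)^3 - i)/3) := by
    intro i
    rw [hAcast]
    calc (∑ j ∈ Finset.Icc 1 i, (((2*j-1:ℕ)):ℝ) * (N (2*j-1) : ℝ))
        ≤ ∑ j ∈ Finset.Icc 1 i, γ * (2*(j:ℝ)-1)^2 := by
          refine Finset.sum_le_sum fun j hj => ?_
          rw [hcast2 j (Finset.mem_Icc.mp hj).1]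
          exact (hkeyodd j (Finset.mem_Icc.mp hj).1).2
      _ = γ * ((4*(i:ℝ)^3 - i)/3) := by rw [← Finset.mul_sum, aux_sum_odd_sq]
  have hAlb : ∀ i : ℕ, γ * ((4*(i:ℝ)^3 - i)/3) - (i:ℝ)^2
      ≤ ((∑ j ∈ Finset.Icc 1 i, (2 * j - 1) * N (2 * j - 1) : ℕ):ℝ) := by
    intro i
    rw [hAcast]
    calc γ * ((4*(i:ℝ)^3 - i)/3) - (i:ℝ)^2
        = ∑ j ∈ Finset.Icc 1 i, (γ * (2*(j:ℝ)-1)^2 - (2*(j:ℝ)-1)) := by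
          rw [Finset.sum_sub_distrib, ← Finset.mul_sum, aux_sum_odd_sq, aux_sum_odd]
      _ ≤ _ := by
          refine Finset.sum_le_sum fun j hj => ?_
          rw [hcast2 j (Finset.mem_Icc.mp hj).1]
          exact (hkeyodd j (Finset.mem_Icc.mp hj).1).1
  have hDub : ∀ i : ℕ, ((∑ j ∈ Finset.Icc 1 (2*i), j * N j : ℕ):ℝ)
      ≤ γ * ((4*(i:ℝ)^3 - i)/3) + (1-γ) * (2*(i:ℝ)*(i+1)*(2*i+1)/3) := by
    intro i
    rw [hScast, ← aux_sum_if γ i]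
    exact Finset.sum_le_sum fun j _ => (key j).2
  have hDlb : ∀ i : ℕ,
      γ * ((4*(i:ℝ)^3 - i)/3) + (1-γ) * (2*(i:ℝ)*(i+1)*(2*i+1)/3) - (2*(i:ℝ)^2 + i)
      ≤ ((∑ j ∈ Finset.Icc 1 (2*i), j * N j : ℕ):ℝ) := by
    intro i
    rw [hScast]
    have e : γ * ((4*(i:ℝ)^3 - i)/3) + (1-γ) * (2*(i:ℝ)*(i+1)*(2*i+1)/3) - (2*(i:ℝ)^2 + i)
        = ∑ j ∈ Finset.Icc 1 (2*i), ((if Odd j then γ else 1-γ) * (j:ℝ)^2 - j) := by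
      rw [Finset.sum_sub_distrib, aux_sum_if γ i, aux_sum_id]
      push_cast; ring
    rw [e]
    exact Finset.sum_le_sum fun j _ => (key j).1
  have partc : Tendsto (fun i : ℕ =>
      ((∑ j ∈ Finset.Icc 1 i, (2 * j - 1) * N (2 * j - 1) : ℕ) : ℝ) /
        ((∑ j ∈ Finset.Icc 1 (2 * i), j * N j : ℕ) : ℝ)) atTop (nhds γ) := by
    have hγval : (4*γ/3)/((4:ℝ)/3) = γ := by
      rw [div_eq_iff (by norm_num : ((4:ℝ)/3) ≠ 0)]; ring
    have hlow : Tendsto (fun i : ℕ =>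
        (γ * ((4*(i:ℝ)^3 - i)/3) - (i:ℝ)^2) /
          (γ * ((4*(i:ℝ)^3 - i)/3) + (1-γ) * (2*(i:ℝ)*(i+1)*(2*i+1)/3)))
        atTop (nhds γ) := by
      have := aux_div_tendsto (4*γ/3) (-1) (-γ/3) 0 (4/3) (2-2*γ) ((2-3*γ)/3) 0
        (by norm_num)
      rw [hγval] at this
      exact this.congr fun i => by ring
    have hup : Tendsto (fun i : ℕ =>
        (γ * ((4*(i:ℝ)^3 - i)/3)) /
          (γ * ((4*(i:ℝ)^3 - i)/3) + (1-γ) * (2*(i:ℝ)*(i+1)*(2*i+1)/3) - (2*(i:ℝ)^2 + i)))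
        atTop (nhds γ) := by
      have := aux_div_tendsto (4*γ/3) 0 (-γ/3) 0 (4/3) (-2*γ) ((2-3*γ)/3-1) 0
        (by norm_num)
      rw [hγval] at this
      exact this.congr fun i => by ring
    have hDlowTop : Tendsto (fun i : ℕ =>
        γ * ((4*(i:ℝ)^3 - i)/3) + (1-γ) * (2*(i:ℝ)*(i+1)*(2*i+1)/3) - (2*(i:ℝ)^2 + i))
        atTop atTop :=
      (aux_cubic_atTop (4/3) (-2*γ) ((2-3*γ)/3-1) 0 (by norm_num)).congr fun i => by ring
    have hNumLowTop : Tendsto (fun i : ℕ => γ * ((4*(i:ℝ)^3 - i)/3) - (i:ℝ)^2)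
        atTop atTop :=
      (aux_cubic_atTop (4*γ/3) (-1) (-γ/3) 0 (by positivity)).congr fun i => by ring
    refine tendsto_of_tendsto_of_tendsto_of_le_of_le' hlow hup ?_ ?_
    · filter_upwards [hDlowTop.eventually_gt_atTop 0, hNumLowTop.eventually_ge_atTop 0]
        with i hDpos hNpos
      have hDpos' : (0:ℝ) < ((∑ j ∈ Finset.Icc 1 (2*i), j * N j : ℕ):ℝ) :=
        lt_of_lt_of_le hDpos (hDlb i)
      exact div_le_div₀ (Nat.cast_nonneg _) (hAlb i) hDpos' (hDub i)
    · filter_upwards [hDlowTop.eventually_gt_atTop 0] with i hDpos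
      have hnum0 : (0:ℝ) ≤ γ * ((4*(i:ℝ)^3 - i)/3) :=
        le_trans (Nat.cast_nonneg _) (hAub i)
      exact div_le_div₀ hnum0 (hAub i) hDpos (hDlb i)
  exact ⟨parta, partb, partc⟩
end
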